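/- arXiv:1711.03748 — 2 statements merged into one kernel-verified Lean document; each statement's English description precedes it below -/
import Mathlib

section
/- If X is an orthodomain with enough directions, then the set oDir(X) of directions of X, with the partial operation ⊕, orthocomplementation d ↦ d', and constants 0, 1, is an orthoalgebra: ⊕ is commutative and associative, d' is the unique direction with d ⊕ d' = 1, and d ⊕ d is defined only for d = 0. -/
section OrthodomainDefs

/-- Order-theoretic compactness: `k` is compact if whenever `k ≤ ⋁D` for a
nonempty directed set `D` having a least upper bound, then `k ≤ d` for some
`d ∈ D`. -/
def CompactIn {P : Type*} [PartialOrder P] (k : P) : Prop :=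
  ∀ D : Set P, D.Nonempty → DirectedOn (· ≤ ·) D →
    ∀ l, IsLUB D l → k ≤ l → ∃ d ∈ D, k ≤ d

/-- A poset is a finite partition lattice if it is order-isomorphic to the
lattice of partitions (equivalence relations) of a finite set. -/
def IsPartitionLat (P : Type*) [PartialOrder P] : Prop :=
  ∃ (α : Type) (_ : Finite α), Nonempty (P ≃o Setoid α)

/-- A Boolean domain: an algebraic (complete, compactly generated) lattice in
which the principal downset of each compact element is a finite partition
lattice. -/
def IsBooleanDomain (P : Type*) [PartialOrder P] : Prop :=
  (∀ S : Set P, ∃ l, IsLUB S l) ∧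
  (∀ x : P, IsLUB {k : P | CompactIn k ∧ k ≤ x} x) ∧
  (∀ k : P, CompactIn k → IsPartitionLat {y : P // y ≤ k})

variable (X : Type*) [PartialOrder X] [OrderBot X]

/-- An orthodomain: a poset with least element in which (1) directed subsets
have joins; (2) the poset is atomistic and atoms are compact; (3) every
principal ideal is a Boolean domain; (4) distinct atoms covered by a common
element join to that element. -/
structure IsOrthodomain : Prop where
  directed_joins : ∀ D : Set X, D.Nonempty → DirectedOn (· ≤ ·) D → ∃ l, IsLUB D l
  atomistic : ∀ x : X, IsLUB {a : X | IsAtom a ∧ a ≤ x} x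
  atoms_compact : ∀ a : X, IsAtom a → CompactIn a
  downset_boolean : ∀ x : X, IsBooleanDomain {y : X // y ≤ x}
  atom_cover : ∀ x y w : X, IsAtom x → IsAtom y → x ≠ y →
    x ⋖ w → y ⋖ w → IsLUB {x, y} w

end OrthodomainDefs

section Directions

variable {X : Type*} [PartialOrder X] [OrderBot X]

/-- `j` is the join of `a` and `b` inside the principal ideal `↓t`. -/
def IsJoinIn (t a b j : X) : Prop :=
  a ≤ j ∧ b ≤ j ∧ j ≤ t ∧ ∀ c : X, c ≤ t → a ≤ c → b ≤ c → j ≤ c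

/-- `x` is a dual modular element of the Boolean domain `↓t`:
`(x ∨ y) ∧ z = x ∨ (y ∧ z)` whenever `x ≤ z`, and
`(w ∨ x) ∧ y = w ∨ (x ∧ y)` whenever `w ≤ y` (all elements and lattice
operations taken inside `↓t`; meets in `↓t` agree with greatest lower bounds
in `X`). -/
def DualModularIn (t x : X) : Prop :=
  x ≤ t ∧
  (∀ y z j m m' : X, y ≤ t → z ≤ t → x ≤ z → IsJoinIn t x y j →
    IsGLB {j, z} m → IsGLB {y, z} m' → IsJoinIn t x m' m) ∧
  (∀ w y j m m' : X, w ≤ t → y ≤ t → w ≤ y → IsJoinIn t w x j →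
    IsGLB {j, y} m → IsGLB {x, y} m' → IsJoinIn t w m' m)

/-- A basic element: the least element or an atom. -/
def BasicIn (x : X) : Prop := x = ⊥ ∨ IsAtom x

/-- `(y, z)` is a principal pair for the basic element `x` in the Boolean
domain `↓t`: `y` and `z` are dual modular in `↓t`, `y ∧ z = x`, and either
`y = ⊤` and `z` is basic, or `z = ⊤` and `y` is basic, or `y ∨ z = ⊤` and
`y ∧ z = x` is basic but not dual modular. -/
def PrincipalPairFor (t x y z : X) : Prop :=
  DualModularIn t y ∧ DualModularIn t z ∧ IsGLB {y, z} x ∧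
  ((y = t ∧ BasicIn z) ∨ (z = t ∧ BasicIn y) ∨
    (IsJoinIn t y z t ∧ BasicIn x ∧ ¬ DualModularIn t x))

/-- A direction for a basic element `x` of an orthodomain `X`: a map
`d : ↑x → X²` such that (1) `d y` is a principal pair for `x` in the Boolean
domain `↓y`; (2) if `y ≤ z` and `d z = (v, w)` then `d y = (y ∧ v, y ∧ w)`;
(3) if `x ⋖ y, z` with `d y = (x, y)` and `d z = (z, x)`, then `y ∨ z` exists
and covers both `y` and `z`. -/
def IsDirectionFor (x : X) (d : {y : X // x ≤ y} → X × X) : Prop :=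
  BasicIn x ∧
  (∀ y : {y : X // x ≤ y}, PrincipalPairFor y.1 x (d y).1 (d y).2) ∧
  (∀ y z : {y : X // x ≤ y}, y.1 ≤ z.1 →
    IsGLB {y.1, (d z).1} (d y).1 ∧ IsGLB {y.1, (d z).2} (d y).2) ∧
  (∀ y z : {y : X // x ≤ y}, x ⋖ y.1 → x ⋖ z.1 →
    d y = (x, y.1) → d z = (z.1, x) →
    ∃ j : X, IsLUB {y.1, z.1} j ∧ y.1 ⋖ j ∧ z.1 ⋖ j)

end Directions

section ODir

variable (X : Type*) [PartialOrder X] [OrderBot X]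

/-- `X` has enough directions: it is proper (no basic maximal elements) and
every basic element has a direction. -/
def EnoughDirections : Prop :=
  (∀ x : X, BasicIn x → ¬ IsMax x) ∧
  (∀ x : X, BasicIn x → ∃ d, IsDirectionFor x d)

/-- The set `oDir(X)` of directions of `X` (for basic elements). -/
def ODir := {p : Σ x : X, ({y : X // x ≤ y} → X × X) // IsDirectionFor p.1 p.2}

variable {X}

/-- `d` is the direction `0`, the direction for `⊥` with `0 w = (⊥, w)`. -/
def IsZeroD (d : ODir X) : Prop :=
  d.1.1 = (⊥ : X) ∧ ∀ y, d.1.2 y = ((⊥ : X), y.1)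

/-- `d` is the direction `1`, the direction for `⊥` with `1 w = (w, ⊥)`. -/
def IsOneD (d : ODir X) : Prop :=
  d.1.1 = (⊥ : X) ∧ ∀ y, d.1.2 y = (y.1, (⊥ : X))

/-- `e` is the orthocomplement `d'` of `d`: a direction for the same basic
element, whose values are the componentwise swaps of those of `d`. -/
def IsComplD (d e : ODir X) : Prop :=
  e.1.1 = d.1.1 ∧
  ∀ (y : {y : X // e.1.1 ≤ y}) (y' : {y : X // d.1.1 ≤ y}), y.1 = y'.1 →
    e.1.2 y = ((d.1.2 y').2, (d.1.2 y').1)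

/-- The partial orthogonal sum on `oDir(X)`, as a relation: `OSum d e f` means
`d ⊕ e` is defined and equals `f`.  It is defined by: `d ⊕ 0 = d = 0 ⊕ d`;
`d ⊕ d' = 1`; and, for `d` a direction for an atom `x` and `e` a direction for
an atom `y` with `x`, `y` near, `w = x ∨ y` and `z` the third atom below `w`:
if `d w = (x, w)` and `e w = (y, w)`, then `d ⊕ e` is the direction for `z`
whose value at `w` is `(w, z)`. -/
def OSum (d e f : ODir X) : Prop :=
  (IsZeroD e ∧ f = d) ∨ (IsZeroD d ∧ f = e) ∨
  (IsComplD d e ∧ IsOneD f) ∨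
  (∃ w z : X, IsAtom d.1.1 ∧ IsAtom e.1.1 ∧ d.1.1 ≠ e.1.1 ∧
    IsLUB {d.1.1, e.1.1} w ∧
    IsAtom z ∧ z ≠ d.1.1 ∧ z ≠ e.1.1 ∧ z ⋖ w ∧ f.1.1 = z ∧
    (∃ hd : d.1.1 ≤ w, d.1.2 ⟨w, hd⟩ = (d.1.1, w)) ∧
    (∃ he : e.1.1 ≤ w, e.1.2 ⟨w, he⟩ = (e.1.1, w)) ∧
    (∃ hf : f.1.1 ≤ w, f.1.2 ⟨w, hf⟩ = (w, z)))

end ODir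

/-! ### Part A: basic order lemmas -/
set_option linter.unusedSectionVars false
section PartA
variable {X : Type*} [PartialOrder X] [OrderBot X]

lemma isGLB_pair_left {a b : X} (h : a ≤ b) : IsGLB {a, b} a :=
  ⟨by simp [lowerBounds, h], fun c hc => hc (by simp)⟩

lemma isGLB_pair_bot (b : X) : IsGLB {(⊥ : X), b} ⊥ := isGLB_pair_left bot_le

lemma IsJoinIn.unique {t a b j j' : X} (h : IsJoinIn t a b j) (h' : IsJoinIn t a b j') : j = j' :=
  le_antisymm (h.2.2.2 j' h'.2.2.1 h'.1 h'.2.1) (h'.2.2.2 j h.2.2.1 h.1 h.2.1)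

lemma isJoinIn_bot_left {t b : X} (hb : b ≤ t) : IsJoinIn t ⊥ b b :=
  ⟨bot_le, le_rfl, hb, fun _ _ _ hc => hc⟩

lemma isJoinIn_bot_eq {t b j : X} (h : IsJoinIn t ⊥ b j) : j = b :=
  h.unique (isJoinIn_bot_left (le_trans h.2.1 h.2.2.1))

lemma dualModularIn_bot (t : X) : DualModularIn t ⊥ := by
  refine ⟨bot_le, ?_, ?_⟩
  · intro y z j m m' hy hz _ hj hm hm'
    have hjy : j = y := hj.unique (isJoinIn_bot_left hy)
    subst hjy
    have : m = m' := hm.unique hm'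
    subst this
    exact ⟨bot_le, le_rfl, (hm.1 (by simp)).trans hz, fun c _ _ h2 => h2⟩
  · intro w y j m m' hw hy hwy hj hm hm'
    have hjw : j = w := le_antisymm (hj.2.2.2 w hw le_rfl bot_le) hj.1
    rw [hjw] at hm
    have hmw : m = w := le_antisymm (hm.1 (by simp)) (hm.2 (by simp [lowerBounds, hwy]))
    have hm'b : m' = ⊥ := le_antisymm (hm'.1 (by simp)) bot_le
    subst hmw; subst hm'b
    exact ⟨le_rfl, bot_le, hw, fun c _ h1 _ => h1⟩

lemma dualModularIn_self (t : X) : DualModularIn t t := by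
  refine ⟨le_rfl, ?_, ?_⟩
  · intro y z j m m' hy hz htz hj hm hm'
    have hzt : z = t := le_antisymm hz htz
    have hjt : j = t := le_antisymm hj.2.2.1 hj.1
    rw [hjt, hzt] at hm
    have hmt : m = t := le_antisymm (hm.1 (by simp)) (hm.2 (by simp [lowerBounds]))
    have hm'y : m' = y := by
      rw [hzt] at hm'
      exact le_antisymm (hm'.1 (by simp)) (hm'.2 (by simp [lowerBounds, hy]))
    rw [hmt, hm'y]
    exact ⟨le_rfl, hy, le_rfl, fun c _ h1 _ => h1⟩
  · intro w y j m m' hw hy hwy hj hm hm'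
    have hjt : j = t := le_antisymm hj.2.2.1 hj.2.1
    rw [hjt] at hm
    have hmy : m = y := le_antisymm (hm.1 (by simp)) (hm.2 (by simp [lowerBounds, hy]))
    have hm'y : m' = y := le_antisymm (hm'.1 (by simp)) (hm'.2 (by simp [lowerBounds, hy]))
    rw [hmy, hm'y]
    exact ⟨hwy, le_rfl, hy, fun c _ _ h2 => h2⟩

end PartA

/-! ### Part B: zero and one directions, swap, extensionality -/
section PartB
variable {X : Type*} [PartialOrder X] [OrderBot X]

lemma isGLB_pair_right {a b : X} (h : b ≤ a) : IsGLB {a, b} b := by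
  rw [Set.pair_comm]; exact isGLB_pair_left h

lemma isJoinIn_of_isLUB {t a b j : X} (hj : IsLUB {a, b} j) (hjt : j ≤ t) : IsJoinIn t a b j :=
  ⟨hj.1 (by simp), hj.1 (by simp), hjt, fun c _ h1 h2 => hj.2 (by simp [upperBounds, h1, h2])⟩

lemma IsJoinIn.symm {t a b j : X} (h : IsJoinIn t a b j) : IsJoinIn t b a j :=
  ⟨h.2.1, h.1, h.2.2.1, fun c hc h1 h2 => h.2.2.2 c hc h2 h1⟩

lemma PrincipalPairFor.symm {t x a b : X} (h : PrincipalPairFor t x a b) :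
    PrincipalPairFor t x b a := by
  obtain ⟨h1, h2, h3, h4⟩ := h
  refine ⟨h2, h1, by rwa [Set.pair_comm], ?_⟩
  rcases h4 with h4 | h4 | h4
  · exact Or.inr (Or.inl h4)
  · exact Or.inl h4
  · exact Or.inr (Or.inr ⟨h4.1.symm, h4.2⟩)

lemma IsDirectionFor.swap {x : X} {d : {y : X // x ≤ y} → X × X} (h : IsDirectionFor x d) :
    IsDirectionFor x (fun y => ((d y).2, (d y).1)) := by
  obtain ⟨h1, h2, h3, h4⟩ := h
  refine ⟨h1, fun y => (h2 y).symm, fun y z hyz => ⟨(h3 y z hyz).2, (h3 y z hyz).1⟩, ?_⟩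
  intro y z hy hz hdy hdz
  simp only [Prod.mk.injEq] at hdy hdz
  obtain ⟨j, hj1, hj2, hj3⟩ := h4 z y hz hy (by ext <;> simp [hdz.1, hdz.2]) (by ext <;> simp [hdy.1, hdy.2])
  exact ⟨j, by rwa [Set.pair_comm], hj3, hj2⟩

lemma principalPair_one (t : X) : PrincipalPairFor t ⊥ t ⊥ :=
  ⟨dualModularIn_self t, dualModularIn_bot t, isGLB_pair_right bot_le,
    Or.inl ⟨rfl, Or.inl rfl⟩⟩

lemma principalPair_zero (t : X) : PrincipalPairFor t ⊥ ⊥ t :=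
  (principalPair_one t).symm

lemma isDirectionFor_one : IsDirectionFor (⊥ : X) (fun y => (y.1, ⊥)) := by
  refine ⟨Or.inl rfl, fun y => principalPair_one y.1, fun y z hyz =>
    ⟨isGLB_pair_left hyz, isGLB_pair_right bot_le⟩, ?_⟩
  intro y z hy hz hdy _
  simp only [Prod.mk.injEq] at hdy
  exact absurd hdy.1 hy.lt.ne'

lemma isDirectionFor_zero : IsDirectionFor (⊥ : X) (fun y => ((⊥ : X), y.1)) := by
  refine ⟨Or.inl rfl, fun y => principalPair_zero y.1, fun y z hyz =>
    ⟨isGLB_pair_right bot_le, isGLB_pair_left hyz⟩, ?_⟩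
  intro y z hy hz _ hdz
  simp only [Prod.mk.injEq] at hdz
  exact absurd hdz.2 hz.lt.ne'

def zeroD : ODir X := ⟨⟨⊥, fun y => ((⊥ : X), y.1)⟩, isDirectionFor_zero⟩
def oneD : ODir X := ⟨⟨⊥, fun y => (y.1, (⊥ : X))⟩, isDirectionFor_one⟩

lemma isZeroD_zeroD : IsZeroD (zeroD (X := X)) := ⟨rfl, fun _ => rfl⟩
lemma isOneD_oneD : IsOneD (oneD (X := X)) := ⟨rfl, fun _ => rfl⟩

lemma ODir.ext' {d e : ODir X} (h1 : d.1.1 = e.1.1)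
    (h2 : ∀ (y : X) (hy : d.1.1 ≤ y) (hy' : e.1.1 ≤ y),
      d.1.2 ⟨y, hy⟩ = e.1.2 ⟨y, hy'⟩) : d = e := by
  obtain ⟨⟨a, f⟩, hf⟩ := d
  obtain ⟨⟨b, g⟩, hg⟩ := e
  simp only at h1
  subst h1
  have : f = g := by
    funext y
    obtain ⟨yv, hyv⟩ := y
    exact h2 yv hyv hyv
  subst this
  rfl

end PartB

/-! ### Part C: Setoid combinatorics -/
section PartC
variable {α : Type}

def pairS (u v : α) : Setoid α :=
  ⟨fun a b => a = b ∨ (a = u ∧ b = v) ∨ (a = v ∧ b = u), by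
    constructor
    · intro a; exact Or.inl rfl
    · intro a b h; rcases h with rfl | ⟨rfl, rfl⟩ | ⟨rfl, rfl⟩ <;> tauto
    · intro a b c h1 h2
      rcases h1 with h1 | ⟨h1a, h1b⟩ | ⟨h1a, h1b⟩ <;>
        rcases h2 with h2 | ⟨h2a, h2b⟩ | ⟨h2a, h2b⟩ <;> subst_vars <;> tauto⟩

lemma pairS_rel (u v a b : α) :
    (pairS u v).r a b ↔ a = b ∨ (a = u ∧ b = v) ∨ (a = v ∧ b = u) := Iff.rfl

lemma pairS_rel_self (u v : α) : (pairS u v).r u v := Or.inr (Or.inl ⟨rfl, rfl⟩)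

lemma pairS_comm (u v : α) : pairS u v = pairS v u := Setoid.ext (by intro x y; rw [pairS_rel, pairS_rel]; tauto)

lemma pairS_le_of_rel {σ : Setoid α} {u v : α} (h : σ.r u v) : pairS u v ≤ σ := by
  intro a b hab
  rcases hab with rfl | ⟨rfl, rfl⟩ | ⟨rfl, rfl⟩
  · exact σ.refl' a
  · exact h
  · exact σ.symm' h

lemma pairS_ne_bot {u v : α} (h : u ≠ v) : pairS u v ≠ ⊥ := by
  intro hb
  have := pairS_rel_self u v
  rw [hb] at this
  exact h this

lemma bot_rel_iff (a b : α) : (⊥ : Setoid α).r a b ↔ a = b := by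
  constructor
  · intro h; exact h
  · rintro rfl; exact (⊥ : Setoid α).refl' a

lemma top_rel (a b : α) : (⊤ : Setoid α).r a b := trivial

lemma isAtom_pairS {u v : α} (h : u ≠ v) : IsAtom (pairS u v) := by
  constructor
  · exact pairS_ne_bot h
  · intro σ hσ
    by_cases hr : σ.r u v
    · exact absurd (le_antisymm hσ.le (pairS_le_of_rel hr)) hσ.ne
    · apply le_antisymm _ bot_le
      intro a b hab
      rcases hσ.le hab with h1 | ⟨h1a, h1b⟩ | ⟨h1a, h1b⟩
      · exact (bot_rel_iff a b).mpr h1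
      · subst h1a; subst h1b; exact absurd hab hr
      · subst h1a; subst h1b; exact absurd (σ.symm' hab) hr

lemma isAtom_setoid_iff {σ : Setoid α} : IsAtom σ ↔ ∃ u v, u ≠ v ∧ σ = pairS u v := by
  constructor
  · intro hσ
    have hne : σ ≠ ⊥ := hσ.1
    have : ∃ u v, u ≠ v ∧ σ.r u v := by
      by_contra hc
      push_neg at hc
      apply hne
      apply Setoid.ext
      intro x y
      rw [bot_rel_iff]
      exact ⟨fun h => by_contra fun hne' => (hc x y hne' h), by rintro rfl; exact σ.refl' x⟩
    obtain ⟨u, v, huv, hr⟩ := this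
    refine ⟨u, v, huv, ?_⟩
    rcases (lt_or_eq_of_le (pairS_le_of_rel hr)) with hlt | heq
    · exact absurd (hσ.2 _ hlt) (pairS_ne_bot huv)
    · exact heq.symm
  · rintro ⟨u, v, huv, rfl⟩
    exact isAtom_pairS huv

lemma pairS_eq_iff {u v u' v' : α} (h : u ≠ v) :
    pairS u v = pairS u' v' → (u = u' ∧ v = v') ∨ (u = v' ∧ v = u') := by
  intro he
  have := pairS_rel_self u v
  rw [he] at this
  rcases this with h1 | h1 | h1
  · exact absurd h1 h
  · exact Or.inl h1
  · exact Or.inr h1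

def blockS (S : Set α) : Setoid α :=
  ⟨fun a b => a = b ∨ (a ∈ S ∧ b ∈ S), by
    constructor
    · intro a; exact Or.inl rfl
    · intro a b h; rcases h with rfl | h <;> tauto
    · intro a b c h1 h2; rcases h1 with rfl | h1 <;> rcases h2 with rfl | h2 <;> tauto⟩

lemma blockS_rel (S : Set α) (a b : α) :
    (blockS S).r a b ↔ a = b ∨ (a ∈ S ∧ b ∈ S) := Iff.rfl

/-- Two disjoint blocks setoid. -/
def blockS2 (S T : Set α) (hdisj : ∀ a, a ∈ S → a ∉ T) : Setoid α :=
  ⟨fun a b => a = b ∨ (a ∈ S ∧ b ∈ S) ∨ (a ∈ T ∧ b ∈ T), by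
    constructor
    · intro a; exact Or.inl rfl
    · intro a b h; rcases h with rfl | h | h <;> tauto
    · intro a b c h1 h2
      rcases h1 with rfl | h1 | h1 <;> rcases h2 with rfl | h2 | h2 <;>
        first | tauto | (exact absurd h2.1 (hdisj _ h1.2)) | (exact absurd h1.2 (hdisj _ h2.1))⟩

end PartC

/-! ### Part D: classification of setoids on a 3-element universe -/
section PartD
variable {α : Type}

lemma setoid_eq_top_3 {p q c : α} (huniv : ∀ a : α, a = p ∨ a = q ∨ a = c)
    {σ : Setoid α} (h1 : σ.r p c) (h2 : σ.r q c) : σ = ⊤ := by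
  apply le_antisymm le_top
  intro a b _
  have hpq : σ.r p q := σ.trans' h1 (σ.symm' h2)
  rcases huniv a with rfl | rfl | rfl <;> rcases huniv b with rfl | rfl | rfl
  · exact σ.refl' _
  · exact hpq
  · exact h1
  · exact σ.symm' hpq
  · exact σ.refl' _
  · exact h2
  · exact σ.symm' h1
  · exact σ.symm' h2
  · exact σ.refl' _

lemma setoid_classify {p q c : α} (huniv : ∀ a : α, a = p ∨ a = q ∨ a = c) (σ : Setoid α) :
    σ = ⊥ ∨ σ = pairS p c ∨ σ = pairS q c ∨ σ = pairS p q ∨ σ = ⊤ := by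
  by_cases h1 : σ.r p c
  · by_cases h2 : σ.r q c
    · exact Or.inr (Or.inr (Or.inr (Or.inr (setoid_eq_top_3 huniv h1 h2))))
    · by_cases h3 : σ.r p q
      · exact absurd (σ.trans' (σ.symm' h3) h1) h2
      · refine Or.inr (Or.inl (le_antisymm ?_ (pairS_le_of_rel h1)))
        intro a b hab
        rcases huniv a with rfl | rfl | rfl <;> rcases huniv b with rfl | rfl | rfl
        · exact Or.inl rfl
        · exact absurd hab h3
        · exact Or.inr (Or.inl ⟨rfl, rfl⟩)
        · exact absurd (σ.symm' hab) h3
        · exact Or.inl rfl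
        · exact absurd hab h2
        · exact Or.inr (Or.inr ⟨rfl, rfl⟩)
        · exact absurd (σ.symm' hab) h2
        · exact Or.inl rfl
  · by_cases h2 : σ.r q c
    · by_cases h3 : σ.r p q
      · exact absurd (σ.trans' h3 h2) h1
      · refine Or.inr (Or.inr (Or.inl (le_antisymm ?_ (pairS_le_of_rel h2))))
        intro a b hab
        rcases huniv a with rfl | rfl | rfl <;> rcases huniv b with rfl | rfl | rfl
        · exact Or.inl rfl
        · exact absurd hab h3
        · exact absurd hab h1
        · exact absurd (σ.symm' hab) h3
        · exact Or.inl rfl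
        · exact Or.inr (Or.inl ⟨rfl, rfl⟩)
        · exact absurd (σ.symm' hab) h1
        · exact Or.inr (Or.inr ⟨rfl, rfl⟩)
        · exact Or.inl rfl
    · by_cases h3 : σ.r p q
      · refine Or.inr (Or.inr (Or.inr (Or.inl (le_antisymm ?_ (pairS_le_of_rel h3)))))
        intro a b hab
        rcases huniv a with rfl | rfl | rfl <;> rcases huniv b with rfl | rfl | rfl
        · exact Or.inl rfl
        · exact Or.inr (Or.inl ⟨rfl, rfl⟩)
        · exact absurd hab h1
        · exact Or.inr (Or.inr ⟨rfl, rfl⟩)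
        · exact Or.inl rfl
        · exact absurd hab h2
        · exact absurd (σ.symm' hab) h1
        · exact absurd (σ.symm' hab) h2
        · exact Or.inl rfl
      · refine Or.inl (le_antisymm ?_ bot_le)
        intro a b hab
        rw [bot_rel_iff]
        rcases huniv a with rfl | rfl | rfl <;> rcases huniv b with rfl | rfl | rfl
        · rfl
        · exact absurd hab h3
        · exact absurd hab h1
        · exact absurd (σ.symm' hab) h3
        · rfl
        · exact absurd hab h2
        · exact absurd (σ.symm' hab) h1
        · exact absurd (σ.symm' hab) h2
        · rfl

lemma pairS_ne_pairS {p q c : α} (hpq : p ≠ q) (hqc : q ≠ c) :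
    pairS p q ≠ pairS p c := by
  intro he
  rcases pairS_eq_iff hpq he with ⟨_, h⟩ | ⟨h1, h2⟩
  · exact hqc h
  · exact hpq h2.symm

lemma pairS_ne_top {p q c : α} (hpq : p ≠ q) (hpc : p ≠ c) (hqc : q ≠ c) :
    pairS p c ≠ ⊤ := by
  intro he
  have : (pairS p c).r p q := by rw [he]; exact top_rel p q
  rcases this with h | ⟨_, h⟩ | ⟨h, _⟩
  · exact hpq h
  · exact hqc h
  · exact hpc h

lemma univ_of_lub_top {p q c : α} (hlub : IsLUB {pairS p c, pairS q c} (⊤ : Setoid α)) :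
    ∀ a : α, a = p ∨ a = q ∨ a = c := by
  intro a
  have hub : blockS {x | x = p ∨ x = q ∨ x = c} ∈ upperBounds {pairS p c, pairS q c} := by
    rintro σ (rfl | rfl)
    · exact pairS_le_of_rel (Or.inr ⟨Or.inl rfl, Or.inr (Or.inr rfl)⟩)
    · exact pairS_le_of_rel (Or.inr ⟨Or.inr (Or.inl rfl), Or.inr (Or.inr rfl)⟩)
  have htop := hlub.2 hub
  have := htop (top_rel a p)
  rcases this with h | h
  · exact Or.inl h
  · exact h.1

lemma two_atoms_top {u₁ v₁ u₂ v₂ : α} (h1 : u₁ ≠ v₁) (h2 : u₂ ≠ v₂)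
    (hne : pairS u₁ v₁ ≠ pairS u₂ v₂)
    (hlub : IsLUB {pairS u₁ v₁, pairS u₂ v₂} (⊤ : Setoid α)) :
    ∃ p q c : α, p ≠ q ∧ p ≠ c ∧ q ≠ c ∧
      (∀ a : α, a = p ∨ a = q ∨ a = c) ∧
      pairS u₁ v₁ = pairS p c ∧ pairS u₂ v₂ = pairS q c := by
  -- first, the two pairs must share exactly one point
  by_cases e1 : u₂ = u₁
  · subst e1
    by_cases e4 : v₂ = v₁
    · subst e4; exact absurd rfl hne
    · -- shared point u₂ = u₁ =: c, p := v₁, q := v₂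
      refine ⟨v₁, v₂, u₂, fun hv => e4 hv.symm, Ne.symm h1, Ne.symm h2, ?_, pairS_comm _ _, pairS_comm _ _⟩
      · have : pairS u₂ v₁ = pairS v₁ u₂ := pairS_comm _ _
        rw [this, pairS_comm u₂ v₂] at hlub
        exact univ_of_lub_top hlub
  · by_cases e2 : u₂ = v₁
    · subst e2
      by_cases e3 : v₂ = u₁
      · subst e3
        exact absurd ((pairS_comm u₂ v₂).symm ▸ rfl) hne
      · -- shared point v₁ = u₂ =: c, p := u₁, q := v₂
        refine ⟨u₁, v₂, u₂, fun hv => e3 (hv.symm.trans rfl), h1, Ne.symm h2, ?_, rfl, pairS_comm _ _⟩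
        rw [pairS_comm u₂ v₂] at hlub
        exact univ_of_lub_top hlub
    · by_cases e3 : v₂ = u₁
      · subst e3
        -- shared point v₂ = u₁ =: c, p := v₁, q := u₂
        refine ⟨v₁, u₂, v₂, fun hv => e2 hv.symm, Ne.symm h1, h2, ?_, pairS_comm _ _, rfl⟩
        rw [pairS_comm v₂ v₁] at hlub
        exact univ_of_lub_top hlub
      · by_cases e4 : v₂ = v₁
        · subst e4
          -- shared point v₂ = v₁ =: c, p := u₁, q := u₂
          refine ⟨u₁, u₂, v₂, Ne.symm e1, h1, h2, ?_, rfl, rfl⟩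
          exact univ_of_lub_top hlub
        · -- disjoint pairs: contradiction
          exfalso
          have hdisj : ∀ a, a ∈ ({x | x = u₁ ∨ x = v₁} : Set α) → a ∉ ({x | x = u₂ ∨ x = v₂} : Set α) := by
            rintro a (rfl | rfl) (h | h)
            · exact e1 h.symm
            · exact e3 h.symm
            · exact e2 h.symm
            · exact e4 h.symm
          set D := blockS2 _ _ hdisj with hD
          have hub : D ∈ upperBounds {pairS u₁ v₁, pairS u₂ v₂} := by
            rintro σ (rfl | rfl)
            · exact pairS_le_of_rel (Or.inr (Or.inl ⟨Or.inl rfl, Or.inr rfl⟩))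
            · exact pairS_le_of_rel (Or.inr (Or.inr ⟨Or.inl rfl, Or.inr rfl⟩))
          have htop := hlub.2 hub
          have := htop (top_rel u₁ u₂)
          rcases this with h | ⟨_, h⟩ | ⟨h, _⟩
          · exact e1 h.symm
          · rcases h with h | h
            · exact e1 h
            · exact e2 h
          · rcases h with h | h
            · exact e1 h.symm
            · exact e3 h.symm

end PartD

/-! ### Part E: compactness and transfer to Setoid via OrderIso -/
section PartE
variable {X : Type*} [PartialOrder X] [OrderBot X]

lemma compactIn_pair {P : Type*} [PartialOrder P] {a b j : P} (ha : CompactIn a) (hb : CompactIn b)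
    (hj : IsLUB {a, b} j) : CompactIn j := by
  intro D hne hdir l hl hjl
  obtain ⟨da, hda, hale⟩ := ha D hne hdir l hl ((hj.1 (by simp)).trans hjl)
  obtain ⟨db, hdb, hble⟩ := hb D hne hdir l hl (le_trans (hj.1 (by simp)) hjl)
  obtain ⟨dc, hdc, h1, h2⟩ := hdir da hda db hdb
  refine ⟨dc, hdc, hj.2 ?_⟩
  rintro x (rfl | rfl)
  · exact hale.trans h1
  · exact hble.trans h2

lemma compactIn_subtype (hdj : ∀ D : Set X, D.Nonempty → DirectedOn (· ≤ ·) D → ∃ l, IsLUB D l)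
    {t k : X} (hk : CompactIn k) (hkt : k ≤ t) : CompactIn (⟨k, hkt⟩ : {y : X // y ≤ t}) := by
  intro D hne hdir l hl hkl
  have hne' : (Subtype.val '' D).Nonempty := hne.image _
  have hdir' : DirectedOn (· ≤ ·) (Subtype.val '' D) := by
    rintro x ⟨x', hx', rfl⟩ y ⟨y', hy', rfl⟩
    obtain ⟨z, hz, hz1, hz2⟩ := hdir x' hx' y' hy'
    exact ⟨z.1, ⟨z, hz, rfl⟩, hz1, hz2⟩
  obtain ⟨m, hm⟩ := hdj _ hne' hdir'
  have hmt : m ≤ t := hm.2 (by rintro x ⟨x', hx', rfl⟩; exact x'.2)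
  have hub : (⟨m, hmt⟩ : {y : X // y ≤ t}) ∈ upperBounds D := by
    intro x hx
    exact Subtype.coe_le_coe.mp (hm.1 ⟨x, hx, rfl⟩)
  have hml : m = l.1 := by
    apply le_antisymm
    · refine hm.2 ?_
      rintro x ⟨x', hx', rfl⟩
      exact Subtype.coe_le_coe.mpr (hl.1 hx')
    · exact Subtype.coe_le_coe.mpr (hl.2 hub)
  obtain ⟨d', hd', hkd⟩ := hk _ hne' hdir' m hm (by rw [hml]; exact hkl)
  obtain ⟨d0, hd0, rfl⟩ := hd'
  exact ⟨d0, hd0, hkd⟩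

def subSubIso {u : X} (k : {y : X // y ≤ u}) :
    {y : {y : X // y ≤ u} // y ≤ k} ≃o {y : X // y ≤ k.1} where
  toFun y := ⟨y.1.1, y.2⟩
  invFun y := ⟨⟨y.1, le_trans y.2 k.2⟩, y.2⟩
  left_inv y := rfl
  right_inv y := rfl
  map_rel_iff' := Iff.rfl

variable {t : X} {β : Type}

lemma psi_le_iff (ψ : {y : X // y ≤ t} ≃o Setoid β) {a b : X} (ha : a ≤ t) (hb : b ≤ t) :
    ψ ⟨a, ha⟩ ≤ ψ ⟨b, hb⟩ ↔ a ≤ b := by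
  rw [OrderIso.le_iff_le]
  exact Subtype.mk_le_mk

lemma psi_inj (ψ : {y : X // y ≤ t} ≃o Setoid β) {a b : X} {ha : a ≤ t} {hb : b ≤ t}
    (h : ψ ⟨a, ha⟩ = ψ ⟨b, hb⟩) : a = b := by
  have := ψ.injective h
  exact congrArg Subtype.val this

lemma psi_top (ψ : {y : X // y ≤ t} ≃o Setoid β) : ψ ⟨t, le_rfl⟩ = ⊤ := by
  apply le_antisymm le_top
  have h1 : ψ.symm ⊤ ≤ ⟨t, le_rfl⟩ := (ψ.symm ⊤).2
  have := ψ.monotone h1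
  rwa [OrderIso.apply_symm_apply] at this

lemma psi_bot (ψ : {y : X // y ≤ t} ≃o Setoid β) : ψ ⟨⊥, bot_le⟩ = ⊥ := by
  apply le_antisymm _ bot_le
  have h1 : (⟨⊥, bot_le⟩ : {y : X // y ≤ t}) ≤ ψ.symm ⊥ := bot_le
  have := ψ.monotone h1
  rwa [OrderIso.apply_symm_apply] at this

lemma psi_atom (ψ : {y : X // y ≤ t} ≃o Setoid β) {a : X} (ha : IsAtom a) (hat : a ≤ t) :
    IsAtom (ψ ⟨a, hat⟩) := by
  constructor
  · intro hc
    rw [← psi_bot ψ] at hc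
    exact ha.1 (psi_inj ψ hc)
  · intro τ hτ
    have h1 : ψ.symm τ < ⟨a, hat⟩ := by
      rw [← ψ.symm_apply_apply ⟨a, hat⟩]
      exact (OrderIso.lt_iff_lt _).mpr hτ
    have h2 : (ψ.symm τ).1 < a := h1
    have h3 : (ψ.symm τ).1 = ⊥ := ha.2 _ h2
    have h4 : ψ.symm τ = ⟨⊥, bot_le⟩ := Subtype.ext h3
    rw [← psi_bot ψ, ← h4, OrderIso.apply_symm_apply]

lemma psi_atom_rev (ψ : {y : X // y ≤ t} ≃o Setoid β) {σ : Setoid β} (hσ : IsAtom σ) :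
    IsAtom ((ψ.symm σ).1 : X) := by
  constructor
  · intro hc
    have h4 : ψ.symm σ = ⟨⊥, bot_le⟩ := Subtype.ext hc
    have h5 : σ = ψ ⟨⊥, bot_le⟩ := by rw [← h4, OrderIso.apply_symm_apply]
    rw [psi_bot ψ] at h5
    exact hσ.1 h5
  · intro b hb
    have hble : b ≤ (ψ.symm σ).1 := hb.le
    have hbt : b ≤ t := hble.trans (ψ.symm σ).2
    have h1 : (⟨b, hbt⟩ : {y : X // y ≤ t}) < ψ.symm σ := hb
    have h2 : ψ ⟨b, hbt⟩ < σ := by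
      have := (OrderIso.lt_iff_lt ψ).mpr h1
      rwa [OrderIso.apply_symm_apply] at this
    have h3 := hσ.2 _ h2
    rw [← psi_bot ψ] at h3
    exact psi_inj ψ h3

end PartE

/-! ### Part F: the scaffold, near lemma, and no-2x2 lemma -/
section PartF
variable {X : Type*} [PartialOrder X] [OrderBot X]

lemma scaffold (h : IsOrthodomain X) {a b w : X} (ha : IsAtom a) (hb : IsAtom b)
    (hab : a ≠ b) (haw : a ≤ w) (hbw : b ≤ w)
    (hjoin : ∀ y, y ≤ w → a ≤ y → b ≤ y → w ≤ y) :
    ∃ (β : Type) (_ : Finite β) (ψ : {y : X // y ≤ w} ≃o Setoid β) (p q c : β),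
      p ≠ q ∧ p ≠ c ∧ q ≠ c ∧ (∀ x : β, x = p ∨ x = q ∨ x = c) ∧
      ψ ⟨a, haw⟩ = pairS p c ∧ ψ ⟨b, hbw⟩ = pairS q c := by
  have hka : CompactIn (⟨a, haw⟩ : {y : X // y ≤ w}) :=
    compactIn_subtype h.directed_joins (h.atoms_compact a ha) haw
  have hkb : CompactIn (⟨b, hbw⟩ : {y : X // y ≤ w}) :=
    compactIn_subtype h.directed_joins (h.atoms_compact b hb) hbw
  have hlubw : IsLUB {(⟨a, haw⟩ : {y : X // y ≤ w}), ⟨b, hbw⟩} ⟨w, le_rfl⟩ := by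
    constructor
    · rintro x (rfl | rfl)
      · exact Subtype.coe_le_coe.mp haw
      · exact Subtype.coe_le_coe.mp hbw
    · intro u hu
      exact hjoin u.1 u.2 (hu (Set.mem_insert _ _)) (hu (Set.mem_insert_of_mem _ rfl))
  have hkw := compactIn_pair hka hkb hlubw
  obtain ⟨β, hfin, ⟨ψ0⟩⟩ := (h.downset_boolean w).2.2 _ hkw
  let ψ : {y : X // y ≤ w} ≃o Setoid β := ((subSubIso ⟨w, le_rfl⟩).symm.trans ψ0 : _)
  have hA : IsAtom (ψ ⟨a, haw⟩) := psi_atom ψ ha haw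
  have hB : IsAtom (ψ ⟨b, hbw⟩) := psi_atom ψ hb hbw
  obtain ⟨u₁, v₁, hne1, hA'⟩ := isAtom_setoid_iff.mp hA
  obtain ⟨u₂, v₂, hne2, hB'⟩ := isAtom_setoid_iff.mp hB
  have hABne : ψ ⟨a, haw⟩ ≠ ψ ⟨b, hbw⟩ := fun hc => hab (psi_inj ψ hc)
  have hlubT : IsLUB {ψ ⟨a, haw⟩, ψ ⟨b, hbw⟩} (⊤ : Setoid β) := by
    constructor
    · rintro σ (rfl | rfl) <;> exact le_top
    · intro σ hσ
      have h1 : ψ ⟨a, haw⟩ ≤ ψ (ψ.symm σ) := by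
        rw [OrderIso.apply_symm_apply]; exact hσ (Set.mem_insert _ _)
      have h2 : ψ ⟨b, hbw⟩ ≤ ψ (ψ.symm σ) := by
        rw [OrderIso.apply_symm_apply]; exact hσ (Set.mem_insert_of_mem _ rfl)
      have h1' : a ≤ (ψ.symm σ).1 := by
        have := ψ.le_iff_le.mp h1
        exact this
      have h2' : b ≤ (ψ.symm σ).1 := ψ.le_iff_le.mp h2
      have hw : w ≤ (ψ.symm σ).1 := hjoin _ (ψ.symm σ).2 h1' h2'
      have hsy : ψ.symm σ = ⟨w, le_rfl⟩ := Subtype.ext (le_antisymm (ψ.symm σ).2 hw)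
      have h3 : σ = ψ ⟨w, le_rfl⟩ := by rw [← hsy, ψ.apply_symm_apply]
      rw [h3, psi_top ψ]
  rw [hA', hB'] at hABne hlubT
  obtain ⟨p, q, c, hpq, hpc, hqc, huniv, he1, he2⟩ := two_atoms_top hne1 hne2 hABne hlubT
  exact ⟨β, hfin, ψ, p, q, c, hpq, hpc, hqc, huniv, hA'.trans he1, hB'.trans he2⟩

lemma near_lemma (h : IsOrthodomain X) {a b w : X} (ha : IsAtom a) (hb : IsAtom b)
    (hab : a ≠ b) (haw : a ≤ w) (hbw : b ≤ w)
    (hjoin : ∀ y, y ≤ w → a ≤ y → b ≤ y → w ≤ y) :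
    ∃ c : X, IsAtom c ∧ c ≤ w ∧ c ≠ a ∧ c ≠ b ∧
      (∀ z, IsAtom z → z ≤ w → z = a ∨ z = b ∨ z = c) ∧
      (∀ z, z ≤ w → z = ⊥ ∨ z = a ∨ z = b ∨ z = c ∨ z = w) ∧
      (∀ z, IsAtom z → z ≤ w → z ⋖ w) ∧
      (∀ z z', IsAtom z → IsAtom z' → z ≤ w → z' ≤ w → z ≠ z' → IsLUB {z, z'} w) := by
  obtain ⟨β, hfin, ψ, p, q, c, hpq, hpc, hqc, huniv, hA, hB⟩ :=
    scaffold h ha hb hab haw hbw hjoin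
  set c3 : X := (ψ.symm (pairS p q)).1 with hc3
  have hc3w : c3 ≤ w := (ψ.symm (pairS p q)).2
  have hψc3 : ψ ⟨c3, hc3w⟩ = pairS p q := by
    show ψ (ψ.symm (pairS p q)) = pairS p q
    exact ψ.apply_symm_apply _
  have hc3atom : IsAtom c3 := psi_atom_rev ψ (isAtom_pairS hpq)
  have hwnotatom : ¬ IsAtom w := by
    intro hw
    have h1 : a = w := by
      rcases (lt_or_eq_of_le haw) with hlt | he
      · exact absurd (hw.2 _ hlt) ha.1
      · exact he
    have h2 : b = w := by
      rcases (lt_or_eq_of_le hbw) with hlt | he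
      · exact absurd (hw.2 _ hlt) hb.1
      · exact he
    exact hab (h1.trans h2.symm)
  have hc3a : c3 ≠ a := by
    intro hc
    have : ψ ⟨a, haw⟩ = pairS p q := by
      rw [← hψc3]; congr 1; exact Subtype.ext hc.symm
    rw [hA] at this
    exact pairS_ne_pairS hpq hqc this.symm
  have hc3b : c3 ≠ b := by
    intro hc
    have : ψ ⟨b, hbw⟩ = pairS p q := by
      rw [← hψc3]; congr 1; exact Subtype.ext hc.symm
    rw [hB] at this
    rw [pairS_comm p q] at this
    exact pairS_ne_pairS (Ne.symm hpq) hpc this.symm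
  have hatomclass : ∀ z, IsAtom z → z ≤ w → z = a ∨ z = b ∨ z = c3 := by
    intro z hz hzw
    have hσ : IsAtom (ψ ⟨z, hzw⟩) := psi_atom ψ hz hzw
    rcases setoid_classify huniv (ψ ⟨z, hzw⟩) with h0 | h0 | h0 | h0 | h0
    · exact absurd h0 hσ.1
    · exact Or.inl (psi_inj ψ (h0.trans hA.symm))
    · exact Or.inr (Or.inl (psi_inj ψ (h0.trans hB.symm)))
    · exact Or.inr (Or.inr (psi_inj ψ (h0.trans hψc3.symm)))
    · exfalso
      rw [h0] at hσ
      have hlt : pairS p c < ⊤ := lt_of_le_of_ne le_top (pairS_ne_top hpq hpc hqc)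
      exact pairS_ne_bot hpc (hσ.2 _ hlt)
  have hlist : ∀ z, z ≤ w → z = ⊥ ∨ z = a ∨ z = b ∨ z = c3 ∨ z = w := by
    intro z hzw
    rcases setoid_classify huniv (ψ ⟨z, hzw⟩) with h0 | h0 | h0 | h0 | h0
    · exact Or.inl (psi_inj ψ (h0.trans (psi_bot ψ).symm))
    · exact Or.inr (Or.inl (psi_inj ψ (h0.trans hA.symm)))
    · exact Or.inr (Or.inr (Or.inl (psi_inj ψ (h0.trans hB.symm))))
    · exact Or.inr (Or.inr (Or.inr (Or.inl (psi_inj ψ (h0.trans hψc3.symm)))))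
    · exact Or.inr (Or.inr (Or.inr (Or.inr (psi_inj ψ (h0.trans (psi_top ψ).symm)))))
  have hcov : ∀ z, IsAtom z → z ≤ w → z ⋖ w := by
    intro z hz hzw
    constructor
    · rcases lt_or_eq_of_le hzw with hlt | he
      · exact hlt
      · exact absurd (he ▸ hz) hwnotatom
    · intro y hy1 hy2
      rcases hlist y (le_of_lt hy2) with rfl | rfl | rfl | rfl | rfl
      · exact not_lt_bot hy1
      · exact absurd (ha.2 _ hy1) hz.1
      · exact absurd (hb.2 _ hy1) hz.1
      · exact absurd (hc3atom.2 _ hy1) hz.1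
      · exact lt_irrefl _ hy2
  refine ⟨c3, hc3atom, hc3w, hc3a, hc3b, hatomclass, hlist, hcov, ?_⟩
  intro z z' hz hz' hzw hz'w hne
  exact h.atom_cover z z' w hz hz' hne (hcov z hz hzw) (hcov z' hz' hz'w)

lemma no_2x2 (h : IsOrthodomain X) {u a b : X} (ha : IsAtom a) (hb : IsAtom b)
    (hab : a ≠ b) (hau : a ≤ u) (hbu : b ≤ u)
    (hlist : ∀ c, c ≤ u → c = ⊥ ∨ c = a ∨ c = b ∨ c = u) : False := by
  have hjoin : ∀ y, y ≤ u → a ≤ y → b ≤ y → u ≤ y := by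
    intro y hyu hay hby
    rcases hlist y hyu with rfl | rfl | rfl | rfl
    · exact absurd (le_antisymm hay bot_le) ha.1
    · rcases lt_or_eq_of_le hby with hlt | he
      · exact absurd (ha.2 _ hlt) hb.1
      · exact absurd he (Ne.symm hab)
    · rcases lt_or_eq_of_le hay with hlt | he
      · exact absurd (hb.2 _ hlt) ha.1
      · exact absurd he hab
    · exact le_rfl
  obtain ⟨β, hfin, ψ, p, q, c, hpq, hpc, hqc, huniv, hA, hB⟩ :=
    scaffold h ha hb hab hau hbu hjoin
  set c3 : X := (ψ.symm (pairS p q)).1 with hc3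
  have hc3u : c3 ≤ u := (ψ.symm (pairS p q)).2
  have hψc3 : ψ ⟨c3, hc3u⟩ = pairS p q := by
    show ψ (ψ.symm (pairS p q)) = pairS p q
    exact ψ.apply_symm_apply _
  rcases hlist c3 hc3u with h0 | h0 | h0 | h0
  · have : ψ ⟨c3, hc3u⟩ = ψ ⟨⊥, bot_le⟩ := by congr 1; exact Subtype.ext h0
    rw [hψc3, psi_bot ψ] at this
    exact pairS_ne_bot hpq this
  · have : ψ ⟨c3, hc3u⟩ = ψ ⟨a, hau⟩ := by congr 1; exact Subtype.ext h0
    rw [hψc3, hA] at this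
    exact pairS_ne_pairS hpq hqc this
  · have : ψ ⟨c3, hc3u⟩ = ψ ⟨b, hbu⟩ := by congr 1; exact Subtype.ext h0
    rw [hψc3, hB, pairS_comm p q] at this
    exact pairS_ne_pairS (Ne.symm hpq) hpc this
  · have : ψ ⟨c3, hc3u⟩ = ψ ⟨u, le_rfl⟩ := by congr 1; exact Subtype.ext h0
    rw [hψc3, psi_top ψ] at this
    exact pairS_ne_top hpc hpq (Ne.symm hqc) this

end PartF

/-! ### Part G: setoid lemmas for the 2x2 argument -/
section PartG
variable {α : Type}

lemma pairS_share_or_disjoint {u₁ v₁ u₂ v₂ : α} (h1 : u₁ ≠ v₁) (h2 : u₂ ≠ v₂)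
    (hne : pairS u₁ v₁ ≠ pairS u₂ v₂) :
    (u₂ ≠ u₁ ∧ u₂ ≠ v₁ ∧ v₂ ≠ u₁ ∧ v₂ ≠ v₁) ∨
    ∃ p q c, p ≠ q ∧ p ≠ c ∧ q ≠ c ∧ pairS u₁ v₁ = pairS p c ∧ pairS u₂ v₂ = pairS q c := by
  by_cases e1 : u₂ = u₁
  · subst e1
    by_cases e4 : v₂ = v₁
    · subst e4; exact absurd rfl hne
    · exact Or.inr ⟨v₁, v₂, u₂, fun hv => e4 hv.symm, Ne.symm h1, Ne.symm h2,
        pairS_comm _ _, pairS_comm _ _⟩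
  · by_cases e2 : u₂ = v₁
    · subst e2
      by_cases e3 : v₂ = u₁
      · subst e3; exact absurd (pairS_comm u₂ v₂).symm hne
      · exact Or.inr ⟨u₁, v₂, u₂, fun hv => e3 hv.symm, h1, Ne.symm h2, rfl, pairS_comm _ _⟩
    · by_cases e3 : v₂ = u₁
      · subst e3
        exact Or.inr ⟨v₁, u₂, v₂, fun hv => e2 hv.symm, Ne.symm h1, h2, pairS_comm _ _, rfl⟩
      · by_cases e4 : v₂ = v₁
        · subst e4
          exact Or.inr ⟨u₁, u₂, v₂, Ne.symm e1, h1, h2, rfl, rfl⟩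
        · exact Or.inl ⟨e1, e2, e3, e4⟩

lemma pairS_le_blockS {p c : α} (S : Set α) (hp : p ∈ S) (hc : c ∈ S) :
    pairS p c ≤ blockS S :=
  pairS_le_of_rel (Or.inr ⟨hp, hc⟩)

/-- A pair setoid whose points lie in a 3-element block is one of the three pairs. -/
lemma pairS_mem_of_le_blockS {b₁ b₂ p q c : α} (hb : b₁ ≠ b₂)
    (hle : pairS b₁ b₂ ≤ blockS {p, q, c}) :
    pairS b₁ b₂ = pairS p q ∨ pairS b₁ b₂ = pairS p c ∨ pairS b₁ b₂ = pairS q c := by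
  have h1 := hle (pairS_rel_self b₁ b₂)
  rcases h1 with h1 | ⟨hm1, hm2⟩
  · exact absurd h1 hb
  · simp only [Set.mem_insert_iff, Set.mem_singleton_iff] at hm1 hm2
    rcases hm1 with rfl | rfl | rfl <;> rcases hm2 with rfl | rfl | rfl
    · exact absurd rfl hb
    · exact Or.inl rfl
    · exact Or.inr (Or.inl rfl)
    · exact Or.inl (pairS_comm _ _)
    · exact absurd rfl hb
    · exact Or.inr (Or.inr rfl)
    · exact Or.inr (Or.inl (pairS_comm _ _))
    · exact Or.inr (Or.inr (pairS_comm _ _))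
    · exact absurd rfl hb

/-- Classification of setoids below a two-disjoint-blocks setoid. -/
lemma le_blockS2_classify {u₁ u₂ v₁ v₂ : α} (hu : u₁ ≠ u₂) (hv : v₁ ≠ v₂)
    (hdisj : ∀ a, a ∈ ({x | x = u₁ ∨ x = u₂} : Set α) → a ∉ ({x | x = v₁ ∨ x = v₂} : Set α))
    {σ : Setoid α} (hσ : σ ≤ blockS2 _ _ hdisj) :
    σ = ⊥ ∨ σ = pairS u₁ u₂ ∨ σ = pairS v₁ v₂ ∨ σ = blockS2 _ _ hdisj := by
  by_cases hU : σ.r u₁ u₂ <;> by_cases hV : σ.r v₁ v₂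
  · -- σ = blockS2
    refine Or.inr (Or.inr (Or.inr (le_antisymm hσ ?_)))
    intro a b hab
    rcases hab with rfl | ⟨ha, hb⟩ | ⟨ha, hb⟩
    · exact σ.refl' a
    · rcases ha with rfl | rfl <;> rcases hb with rfl | rfl
      · exact σ.refl' _
      · exact hU
      · exact σ.symm' hU
      · exact σ.refl' _
    · rcases ha with rfl | rfl <;> rcases hb with rfl | rfl
      · exact σ.refl' _
      · exact hV
      · exact σ.symm' hV
      · exact σ.refl' _
  · refine Or.inr (Or.inl (le_antisymm ?_ (pairS_le_of_rel hU)))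
    intro a b hab
    rcases hσ hab with rfl | ⟨ha, hb⟩ | ⟨ha, hb⟩
    · exact Or.inl rfl
    · rcases ha with rfl | rfl <;> rcases hb with rfl | rfl
      · exact Or.inl rfl
      · exact Or.inr (Or.inl ⟨rfl, rfl⟩)
      · exact Or.inr (Or.inr ⟨rfl, rfl⟩)
      · exact Or.inl rfl
    · rcases ha with rfl | rfl <;> rcases hb with rfl | rfl
      · exact Or.inl rfl
      · exact absurd hab hV
      · exact absurd (σ.symm' hab) hV
      · exact Or.inl rfl
  · refine Or.inr (Or.inr (Or.inl (le_antisymm ?_ (pairS_le_of_rel hV))))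
    intro a b hab
    rcases hσ hab with rfl | ⟨ha, hb⟩ | ⟨ha, hb⟩
    · exact Or.inl rfl
    · rcases ha with rfl | rfl <;> rcases hb with rfl | rfl
      · exact Or.inl rfl
      · exact absurd hab hU
      · exact absurd (σ.symm' hab) hU
      · exact Or.inl rfl
    · rcases ha with rfl | rfl <;> rcases hb with rfl | rfl
      · exact Or.inl rfl
      · exact Or.inr (Or.inl ⟨rfl, rfl⟩)
      · exact Or.inr (Or.inr ⟨rfl, rfl⟩)
      · exact Or.inl rfl
  · refine Or.inl (le_antisymm ?_ bot_le)
    intro a b hab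
    rw [bot_rel_iff]
    rcases hσ hab with rfl | ⟨ha, hb⟩ | ⟨ha, hb⟩
    · rfl
    · rcases ha with rfl | rfl <;> rcases hb with rfl | rfl
      · rfl
      · exact absurd hab hU
      · exact absurd (σ.symm' hab) hU
      · rfl
    · rcases ha with rfl | rfl <;> rcases hb with rfl | rfl
      · rfl
      · exact absurd hab hV
      · exact absurd (σ.symm' hab) hV
      · rfl

lemma pairS_ne_of_disjoint {u₁ u₂ v₁ v₂ : α} (hu : u₁ ≠ u₂)
    (h1 : u₁ ≠ v₁) (h2 : u₁ ≠ v₂) : pairS u₁ u₂ ≠ pairS v₁ v₂ := by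
  intro he
  rcases pairS_eq_iff hu he with ⟨ha, _⟩ | ⟨ha, _⟩
  · exact h1 ha
  · exact h2 ha

end PartG

/-! ### Part H: covers of atoms and values of directions at covers -/
section PartH
variable {X : Type*} [PartialOrder X] [OrderBot X]

lemma atom_le_atom {z a : X} (hz : IsAtom z) (ha : IsAtom a) (h : z ≤ a) : z = a := by
  rcases lt_or_eq_of_le h with hlt | he
  · exact absurd (ha.2 _ hlt) hz.1
  · exact he

lemma exists_atom_not_le (h : IsOrthodomain X) {z u : X} (hzu : z ≤ u) (hne : z ≠ u) :
    ∃ a, IsAtom a ∧ a ≤ u ∧ ¬ a ≤ z := by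
  by_contra hc
  push_neg at hc
  have : z ∈ upperBounds {a : X | IsAtom a ∧ a ≤ u} := by
    intro a ha
    exact hc a ha.1 ha.2
  exact hne (le_antisymm hzu ((h.atomistic u).2 this))

/-- Near-structure of a cover of an atom. -/
lemma near_of_covby (h : IsOrthodomain X) {z w : X} (hz : IsAtom z) (hzw : z ⋖ w) :
    ∃ a, IsAtom a ∧ a ≤ w ∧ a ≠ z ∧
    ∃ c : X, IsAtom c ∧ c ≤ w ∧ c ≠ z ∧ c ≠ a ∧
      (∀ p, IsAtom p → p ≤ w → p = z ∨ p = a ∨ p = c) ∧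
      (∀ p, p ≤ w → p = ⊥ ∨ p = z ∨ p = a ∨ p = c ∨ p = w) ∧
      (∀ p, IsAtom p → p ≤ w → p ⋖ w) ∧
      (∀ p p', IsAtom p → IsAtom p' → p ≤ w → p' ≤ w → p ≠ p' → IsLUB {p, p'} w) := by
  obtain ⟨a, ha, haw, hanz⟩ := exists_atom_not_le h hzw.le hzw.lt.ne
  have hane : a ≠ z := fun hc => hanz (hc ▸ le_rfl)
  have hjoin : ∀ y, y ≤ w → z ≤ y → a ≤ y → w ≤ y := by
    intro y hyw hzy hay
    have hzy' : z < y := lt_of_le_of_ne hzy (fun hc => hanz (hc ▸ hay))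
    rcases lt_or_eq_of_le hyw with hlt | he
    · exact absurd hlt (hzw.2 hzy')
    · exact he.ge
  obtain ⟨c, hc, hcw, hca, hcb, hclass, hlist, hcov, hlub⟩ :=
    near_lemma h hz ha (Ne.symm hane) hzw.le haw hjoin
  exact ⟨a, ha, haw, hane, c, hc, hcw, hca, hcb, hclass, hlist, hcov, hlub⟩

/-- Construction of a cover of `z` containing a given atom `a`, inside `↓u`. -/
lemma cover_in (h : IsOrthodomain X) {z a u : X} (hz : IsAtom z) (ha : IsAtom a)
    (hne : a ≠ z) (hzu : z ≤ u) (hau : a ≤ u) :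
    ∃ c, z ≤ c ∧ a ≤ c ∧ c ≤ u ∧ (∀ y, y ≤ u → z ≤ y → a ≤ y → c ≤ y) ∧ z ⋖ c := by
  obtain ⟨l, hl⟩ := (h.downset_boolean u).1 {⟨z, hzu⟩, ⟨a, hau⟩}
  refine ⟨l.1, hl.1 (Set.mem_insert _ _), hl.1 (Set.mem_insert_of_mem _ rfl), l.2, ?_, ?_⟩
  · intro y hyu hzy hay
    have : (⟨y, hyu⟩ : {y : X // y ≤ u}) ∈ upperBounds {⟨z, hzu⟩, ⟨a, hau⟩} := by
      rintro x (rfl | rfl)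
      · exact hzy
      · exact hay
    exact hl.2 this
  · have hzl : z ≤ l.1 := hl.1 (Set.mem_insert _ _)
    have hal : a ≤ l.1 := hl.1 (Set.mem_insert_of_mem _ rfl)
    have hjoin : ∀ y, y ≤ l.1 → z ≤ y → a ≤ y → l.1 ≤ y := by
      intro y hyl hzy hay
      have : (⟨y, hyl.trans l.2⟩ : {y : X // y ≤ u}) ∈ upperBounds {⟨z, hzu⟩, ⟨a, hau⟩} := by
        rintro x (rfl | rfl)
        · exact hzy
        · exact hay
      exact hl.2 this
    obtain ⟨c, _, _, _, _, _, _, hcov, _⟩ :=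
      near_lemma h hz ha (Ne.symm hne) hzl hal hjoin
    exact hcov z hz hzl

/-- A direction for an atom takes value `(z,w)` or `(w,z)` at each cover `w` of `z`. -/
lemma dir_cover_val (h : IsOrthodomain X) {z : X} {d : {y : X // z ≤ y} → X × X}
    (hd : IsDirectionFor z d) (hz : IsAtom z) {w : X} (hzw : z ⋖ w) :
    d ⟨w, hzw.le⟩ = (z, w) ∨ d ⟨w, hzw.le⟩ = (w, z) := by
  obtain ⟨a, ha, haw, hane, c3, hc3, hc3w, hc3z, hc3a, hclass, hlist, hcov, hlub⟩ :=
    near_of_covby h hz hzw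
  have pp := hd.2.1 ⟨w, hzw.le⟩
  set A := (d ⟨w, hzw.le⟩).1 with hA
  set B := (d ⟨w, hzw.le⟩).2 with hB
  have hAw : A ≤ w := pp.1.1
  have hBw : B ≤ w := pp.2.1.1
  have hglb : IsGLB {A, B} z := pp.2.2.1
  have hzA : z ≤ A := hglb.1 (Set.mem_insert _ _)
  have hzB : z ≤ B := hglb.1 (Set.mem_insert_of_mem _ rfl)
  have hmem : ∀ E, E ≤ w → z ≤ E → E = z ∨ E = w := by
    intro E hEw hzE
    rcases hlist E hEw with rfl | rfl | rfl | rfl | rfl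
    · exact absurd (le_antisymm bot_le hzE).symm hz.1
    · exact Or.inl rfl
    · exact absurd (atom_le_atom hz ha hzE) (Ne.symm hane)
    · exact absurd (atom_le_atom hz hc3 hzE) (Ne.symm hc3z)
    · exact Or.inr rfl
  have hAzw := hmem A hAw hzA
  have hBzw := hmem B hBw hzB
  have hnzz : ¬ (A = z ∧ B = z) := by
    rintro ⟨hA1, hB1⟩
    rcases pp.2.2.2 with ⟨h1, _⟩ | ⟨h1, _⟩ | ⟨h1, _, _⟩
    · exact hzw.lt.ne (hA1.symm.trans h1)
    · exact hzw.lt.ne (hB1.symm.trans h1)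
    · have := h1.2.2.2 z hzw.le (hA1 ▸ le_rfl) (hB1 ▸ le_rfl)
      exact absurd this (not_le_of_gt hzw.lt)
  have hnww : ¬ (A = w ∧ B = w) := by
    rintro ⟨hA1, hB1⟩
    have : w ≤ z := hglb.2 (by rintro x (rfl | rfl) <;> simp [hA1, hB1])
    exact absurd this (not_le_of_gt hzw.lt)
  rcases hAzw with hA1 | hA1 <;> rcases hBzw with hB1 | hB1
  · exact absurd ⟨hA1, hB1⟩ hnzz
  · exact Or.inl (Prod.ext hA1 hB1)
  · exact Or.inr (Prod.ext hA1 hB1)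
  · exact absurd ⟨hA1, hB1⟩ hnww

end PartH

/-! ### Part I: no mixed orientation for directions of atoms -/
section PartI
variable {X : Type*} [PartialOrder X] [OrderBot X]

lemma isLUB_pair_subtype {t a b w : X} (ha : a ≤ t) (hb : b ≤ t) (hw : w ≤ t)
    (h : IsLUB {a, b} w) : IsLUB {(⟨a, ha⟩ : {y : X // y ≤ t}), ⟨b, hb⟩} ⟨w, hw⟩ := by
  constructor
  · rintro x (rfl | rfl)
    · exact Subtype.coe_le_coe.mp (h.1 (Set.mem_insert _ _))
    · exact Subtype.coe_le_coe.mp (h.1 (Set.mem_insert_of_mem _ rfl))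
  · intro u hu
    refine Subtype.coe_le_coe.mp (h.2 ?_)
    rintro x (rfl | rfl)
    · exact hu (Set.mem_insert _ _)
    · exact hu (Set.mem_insert_of_mem _ rfl)

lemma psi_isLUB_pair {t : X} {β : Type} (ψ : {y : X // y ≤ t} ≃o Setoid β)
    {a b w : X} (ha : a ≤ t) (hb : b ≤ t) (hw : w ≤ t) (h : IsLUB {a, b} w) :
    IsLUB {ψ ⟨a, ha⟩, ψ ⟨b, hb⟩} (ψ ⟨w, hw⟩) := by
  have := (OrderIso.isLUB_image' ψ).mpr (isLUB_pair_subtype ha hb hw h)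
  rwa [Set.image_pair] at this

lemma no_2x2_pullback (h : IsOrthodomain X) {j : X} {γ : Type}
    (ψ : {y : X // y ≤ j} ≃o Setoid γ) {xU xV : X} (hUj : xU ≤ j) (hVj : xV ≤ j)
    (hAU : IsAtom xU) (hAV : IsAtom xV) {u₁ u₂ v₁ v₂ : γ}
    (hu : u₁ ≠ u₂) (hv : v₁ ≠ v₂)
    (hd1 : v₁ ≠ u₁) (hd2 : v₁ ≠ u₂) (hd3 : v₂ ≠ u₁) (hd4 : v₂ ≠ u₂)
    (hU : ψ ⟨xU, hUj⟩ = pairS u₁ u₂) (hV : ψ ⟨xV, hVj⟩ = pairS v₁ v₂) : False := by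
  have hdisj : ∀ a, a ∈ ({x | x = u₁ ∨ x = u₂} : Set γ) → a ∉ ({x | x = v₁ ∨ x = v₂} : Set γ) := by
    rintro a (rfl | rfl) (hc | hc)
    · exact hd1 hc.symm
    · exact hd3 hc.symm
    · exact hd2 hc.symm
    · exact hd4 hc.symm
  set D := blockS2 _ _ hdisj with hD
  set q0 : X := (ψ.symm D).1 with hq0
  have hq0j : q0 ≤ j := (ψ.symm D).2
  have hψq0 : ψ ⟨q0, hq0j⟩ = D := by
    show ψ (ψ.symm D) = D
    exact ψ.apply_symm_apply _
  have hUD : pairS u₁ u₂ ≤ D := pairS_le_of_rel (Or.inr (Or.inl ⟨Or.inl rfl, Or.inr rfl⟩))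
  have hVD : pairS v₁ v₂ ≤ D := pairS_le_of_rel (Or.inr (Or.inr ⟨Or.inl rfl, Or.inr rfl⟩))
  have hUq0 : xU ≤ q0 := by
    have : ψ ⟨xU, hUj⟩ ≤ ψ ⟨q0, hq0j⟩ := by rw [hU, hψq0]; exact hUD
    exact (psi_le_iff ψ _ _).mp this
  have hVq0 : xV ≤ q0 := by
    have : ψ ⟨xV, hVj⟩ ≤ ψ ⟨q0, hq0j⟩ := by rw [hV, hψq0]; exact hVD
    exact (psi_le_iff ψ _ _).mp this
  have hUV : xU ≠ xV := by
    intro hc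
    have : ψ ⟨xU, hUj⟩ = ψ ⟨xV, hVj⟩ := by congr 1; exact Subtype.ext hc
    rw [hU, hV] at this
    exact pairS_ne_of_disjoint hu (Ne.symm hd1) (Ne.symm hd3) this
  have hlist : ∀ c, c ≤ q0 → c = ⊥ ∨ c = xU ∨ c = xV ∨ c = q0 := by
    intro c hcq
    have hcj : c ≤ j := hcq.trans hq0j
    have hσle : ψ ⟨c, hcj⟩ ≤ D := by
      rw [← hψq0]
      exact (psi_le_iff ψ _ _).mpr hcq
    rcases le_blockS2_classify hu hv hdisj hσle with h0 | h0 | h0 | h0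
    · exact Or.inl (psi_inj ψ (h0.trans (psi_bot ψ).symm))
    · exact Or.inr (Or.inl (psi_inj ψ (h0.trans hU.symm)))
    · exact Or.inr (Or.inr (Or.inl (psi_inj ψ (h0.trans hV.symm))))
    · exact Or.inr (Or.inr (Or.inr (psi_inj ψ (h0.trans hψq0.symm))))
  exact no_2x2 h hAU hAV hUV hUq0 hVq0 hlist

lemma no_mixed_atom (h : IsOrthodomain X) {z : X} {d : {y : X // z ≤ y} → X × X}
    (hd : IsDirectionFor z d) (hz : IsAtom z) {w₁ w₂ : X} (h1 : z ⋖ w₁) (h2 : z ⋖ w₂)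
    (hv1 : d ⟨w₁, h1.le⟩ = (w₁, z)) (hv2 : d ⟨w₂, h2.le⟩ = (z, w₂)) : False := by
  by_cases hww : w₁ = w₂
  · subst hww
    rw [hv1] at hv2
    exact h1.lt.ne' (congrArg Prod.fst hv2)
  obtain ⟨j, hj, hw2j, hw1j⟩ := hd.2.2.2 ⟨w₂, h2.le⟩ ⟨w₁, h1.le⟩ h2 h1 hv2 hv1
  obtain ⟨a₁, ha₁, ha₁w, ha₁z, c₁, hc₁, hc₁w, hc₁z, hc₁a, hclass₁, hlist₁, hcov₁, hlub₁⟩ :=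
    near_of_covby h hz h1
  obtain ⟨a₂, ha₂, ha₂w, ha₂z, c₂, hc₂, hc₂w, hc₂z, hc₂a, hclass₂, hlist₂, hcov₂, hlub₂⟩ :=
    near_of_covby h hz h2
  have hW : ¬ w₂ ≤ w₁ := by
    intro hle
    rcases lt_or_eq_of_le hle with hlt | he
    · exact hw2j.2 hlt hw1j.lt
    · exact hww he.symm
  obtain ⟨t, ht, htw₂, htw₁⟩ : ∃ t, IsAtom t ∧ t ≤ w₂ ∧ ¬ t ≤ w₁ := by
    by_cases e1 : a₂ ≤ w₁
    · by_cases e2 : c₂ ≤ w₁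
      · exfalso
        have hlub22 := hlub₂ a₂ c₂ ha₂ hc₂ ha₂w hc₂w (fun hc => hc₂a hc.symm)
        refine hW (hlub22.2 ?_)
        rintro x (rfl | rfl)
        · exact e1
        · exact e2
      · exact ⟨c₂, hc₂, hc₂w, e2⟩
    · exact ⟨a₂, ha₂, ha₂w, e1⟩
  have hw₁lub : IsLUB {z, a₁} w₁ := hlub₁ z a₁ hz ha₁ h1.le ha₁w (Ne.symm ha₁z)
  have hw₂lub : IsLUB {z, a₂} w₂ := hlub₂ z a₂ hz ha₂ h2.le ha₂w (Ne.symm ha₂z)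
  have hkw₁ : CompactIn w₁ := compactIn_pair (h.atoms_compact z hz) (h.atoms_compact a₁ ha₁) hw₁lub
  have hkw₂ : CompactIn w₂ := compactIn_pair (h.atoms_compact z hz) (h.atoms_compact a₂ ha₂) hw₂lub
  have hkj : CompactIn j := compactIn_pair hkw₂ hkw₁ hj
  have hkj' : CompactIn (⟨j, le_rfl⟩ : {y : X // y ≤ j}) :=
    compactIn_subtype h.directed_joins hkj le_rfl
  obtain ⟨γ, hfin, ⟨ψ0⟩⟩ := (h.downset_boolean j).2.2 _ hkj'
  let ψ : {y : X // y ≤ j} ≃o Setoid γ := ((subSubIso ⟨j, le_rfl⟩).symm.trans ψ0 : _)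
  have hzj : z ≤ j := h1.le.trans hw1j.le
  have ha₁j : a₁ ≤ j := ha₁w.trans hw1j.le
  have hc₁j : c₁ ≤ j := hc₁w.trans hw1j.le
  have htj : t ≤ j := htw₂.trans hw2j.le
  have hw₁j : w₁ ≤ j := hw1j.le
  obtain ⟨z1, z2, hz12, hPz⟩ := isAtom_setoid_iff.mp (psi_atom ψ hz hzj)
  obtain ⟨a1, a2, ha12, hPa⟩ := isAtom_setoid_iff.mp (psi_atom ψ ha₁ ha₁j)
  obtain ⟨b1, b2, hb12, hPb⟩ := isAtom_setoid_iff.mp (psi_atom ψ hc₁ hc₁j)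
  obtain ⟨t1, t2, ht12, hPt⟩ := isAtom_setoid_iff.mp (psi_atom ψ ht htj)
  have hL1 : IsLUB {ψ ⟨z, hzj⟩, ψ ⟨a₁, ha₁j⟩} (ψ ⟨w₁, hw₁j⟩) :=
    psi_isLUB_pair ψ hzj ha₁j hw₁j hw₁lub
  have hPzPa : pairS z1 z2 ≠ pairS a1 a2 := by
    rw [← hPz, ← hPa]
    intro hc
    exact ha₁z (psi_inj ψ hc.symm)
  have hPtW : ¬ pairS t1 t2 ≤ ψ ⟨w₁, hw₁j⟩ := by
    rw [← hPt]
    intro hc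
    exact htw₁ ((psi_le_iff ψ _ _).mp hc)
  have hPbW : pairS b1 b2 ≤ ψ ⟨w₁, hw₁j⟩ := by
    rw [← hPb]
    exact (psi_le_iff ψ _ _).mpr hc₁w
  -- find two disjoint pairs among the four atoms below j
  have hmain : ∃ (xU xV : X) (hUj : xU ≤ j) (hVj : xV ≤ j) (u₁ u₂ v₁ v₂ : γ),
      IsAtom xU ∧ IsAtom xV ∧ u₁ ≠ u₂ ∧ v₁ ≠ v₂ ∧
      v₁ ≠ u₁ ∧ v₁ ≠ u₂ ∧ v₂ ≠ u₁ ∧ v₂ ≠ u₂ ∧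
      ψ ⟨xU, hUj⟩ = pairS u₁ u₂ ∧ ψ ⟨xV, hVj⟩ = pairS v₁ v₂ := by
    rcases pairS_share_or_disjoint hz12 ha12 hPzPa with ⟨e1, e2, e3, e4⟩ | ⟨p, q, c, hpq, hpc, hqc, hez, hea⟩
    · exact ⟨z, a₁, hzj, ha₁j, z1, z2, a1, a2, hz, ha₁, hz12, ha12, e1, e2, e3, e4, hPz, hPa⟩
    · -- shared point: W₁ is below the 3-block {p, q, c}
      have hWblock : ψ ⟨w₁, hw₁j⟩ ≤ blockS {p, q, c} := by
        apply hL1.2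
        rintro x (rfl | rfl)
        · rw [hPz, hez]
          exact pairS_le_blockS _ (Set.mem_insert _ _) (by simp)
        · rw [hPa, hea]
          exact pairS_le_blockS _ (by simp) (by simp)
      have hPzle : pairS z1 z2 ≤ ψ ⟨w₁, hw₁j⟩ := by
        rw [← hPz]; exact (psi_le_iff ψ _ _).mpr h1.le
      have hPale : pairS a1 a2 ≤ ψ ⟨w₁, hw₁j⟩ := by
        rw [← hPa]; exact (psi_le_iff ψ _ _).mpr ha₁w
      -- Pb is the third pair, pairS p q
      have hPbne1 : pairS b1 b2 ≠ pairS p c := by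
        rw [← hez, ← hPz, ← hPb]
        intro hc'
        exact hc₁z (psi_inj ψ hc')
      have hPbne2 : pairS b1 b2 ≠ pairS q c := by
        rw [← hea, ← hPa, ← hPb]
        intro hc'
        exact hc₁a (psi_inj ψ hc')
      have hPb3 : pairS b1 b2 = pairS p q := by
        rcases pairS_mem_of_le_blockS hb12 (le_trans hPbW hWblock) with h0 | h0 | h0
        · exact h0
        · exact absurd h0 hPbne1
        · exact absurd h0 hPbne2
      -- the points of Pt are not both in {p, q, c}
      have hPtblock : ¬ (t1 ∈ ({p, q, c} : Set γ) ∧ t2 ∈ ({p, q, c} : Set γ)) := by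
        rintro ⟨hm1, hm2⟩
        have : pairS t1 t2 ≤ blockS {p, q, c} := pairS_le_blockS _ hm1 hm2
        rcases pairS_mem_of_le_blockS ht12 this with h0 | h0 | h0
        · exact hPtW (h0 ▸ hPb3 ▸ hPbW)
        · exact hPtW (h0 ▸ hez ▸ hPzle)
        · exact hPtW (h0 ▸ hea ▸ hPale)
      -- get a point of Pt outside the block
      obtain ⟨dd, ee, hde, hPt', hdout⟩ : ∃ dd ee, dd ≠ ee ∧ pairS t1 t2 = pairS dd ee ∧
          dd ∉ ({p, q, c} : Set γ) := by
        by_cases hm1 : t1 ∈ ({p, q, c} : Set γ)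
        · have hm2 : t2 ∉ ({p, q, c} : Set γ) := fun hc' => hPtblock ⟨hm1, hc'⟩
          exact ⟨t2, t1, Ne.symm ht12, pairS_comm _ _, hm2⟩
        · exact ⟨t1, t2, ht12, rfl, hm1⟩
      simp only [Set.mem_insert_iff, Set.mem_singleton_iff, not_or] at hdout
      obtain ⟨hdp, hdq, hdc⟩ := hdout
      by_cases hep : ee = p
      · -- use Pt and Pa = pairS q c
        subst hep
        refine ⟨t, a₁, htj, ha₁j, dd, ee, q, c, ht, ha₁, hde, hqc, Ne.symm hdq, ?_, Ne.symm hdc, ?_,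
          hPt.trans hPt', hPa.trans hea⟩
        · exact fun hc' => hpq hc'.symm
        · exact fun hc' => hpc hc'.symm
      · by_cases heq : ee = q
        · -- use Pt and Pz = pairS p c
          subst heq
          refine ⟨t, z, htj, hzj, dd, ee, p, c, ht, hz, hde, hpc, Ne.symm hdp, hpq, Ne.symm hdc, ?_,
            hPt.trans hPt', hPz.trans hez⟩
          exact fun hc' => hqc hc'.symm
        · -- ee ∉ {p, q}: use Pt and Pb = pairS p q
          exact ⟨t, c₁, htj, hc₁j, dd, ee, p, q, ht, hc₁, hde, hpq, Ne.symm hdp, fun hc' => hep hc'.symm,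
            Ne.symm hdq, fun hc' => heq hc'.symm, hPt.trans hPt', hPb.trans hPb3⟩
  obtain ⟨xU, xV, hUj, hVj, u₁, u₂, v₁, v₂, hAU, hAV, hu, hv, hd1, hd2, hd3, hd4, hU, hV⟩ := hmain
  exact no_2x2_pullback h ψ hUj hVj hAU hAV hu hv hd1 hd2 hd3 hd4 hU hV

end PartI

/-! ### Part J: the master lemma -/
section PartJ
variable {X : Type*} [PartialOrder X] [OrderBot X]

lemma dir_val_self {z : X} {d : {y : X // z ≤ y} → X × X} (hd : IsDirectionFor z d)
    (hzz : z ≤ z) : d ⟨z, hzz⟩ = (z, z) := by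
  have pp := hd.2.1 ⟨z, hzz⟩
  have hA : (d ⟨z, hzz⟩).1 ≤ z := pp.1.1
  have hB : (d ⟨z, hzz⟩).2 ≤ z := pp.2.1.1
  have hglb : IsGLB {(d ⟨z, hzz⟩).1, (d ⟨z, hzz⟩).2} z := pp.2.2.1
  have hzA : z ≤ (d ⟨z, hzz⟩).1 := hglb.1 (Set.mem_insert _ _)
  have hzB : z ≤ (d ⟨z, hzz⟩).2 := hglb.1 (Set.mem_insert_of_mem _ rfl)
  exact Prod.ext (le_antisymm hA hzA) (le_antisymm hB hzB)

lemma master_atom_right (h : IsOrthodomain X) {z : X} {d : {y : X // z ≤ y} → X × X}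
    (hd : IsDirectionFor z d) (hz : IsAtom z)
    (hex : ∃ (w : X) (hw : z ⋖ w), d ⟨w, hw.le⟩ = (w, z)) :
    ∀ y : {y : X // z ≤ y}, d y = (y.1, z) := by
  obtain ⟨w, hw, hvw⟩ := hex
  -- every cover has the same orientation
  have hcovval : ∀ (c : X) (hc : z ⋖ c) (hzc : z ≤ c), d ⟨c, hzc⟩ = (c, z) := by
    intro c hc hzc
    have : d ⟨c, hc.le⟩ = (z, c) ∨ d ⟨c, hc.le⟩ = (c, z) := dir_cover_val h hd hz hc
    rcases this with h0 | h0
    · exact absurd (no_mixed_atom h hd hz hw hc hvw h0) id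
    · exact h0
  intro y
  obtain ⟨u, hzu⟩ := y
  by_cases huz : u = z
  · subst huz
    rw [dir_val_self hd hzu]
  -- general element u > z
  set A := (d ⟨u, hzu⟩).1 with hA
  set B := (d ⟨u, hzu⟩).2 with hB
  have pp := hd.2.1 ⟨u, hzu⟩
  have hAu : A ≤ u := pp.1.1
  have hBu : B ≤ u := pp.2.1.1
  have hglb : IsGLB {A, B} z := pp.2.2.1
  have hzA : z ≤ A := hglb.1 (Set.mem_insert _ _)
  have hzB : z ≤ B := hglb.1 (Set.mem_insert_of_mem _ rfl)
  -- key: for every atom a ≤ u, a ≤ A and (a = z ∨ ¬ a ≤ B)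
  have hkey : ∀ a, IsAtom a → a ≤ u → a ≤ A ∧ (a = z ∨ ¬ a ≤ B) := by
    intro a ha hau
    by_cases haz : a = z
    · exact ⟨haz ▸ hzA, Or.inl haz⟩
    · obtain ⟨c, hzc, hac, hcu, hcjoin, hccov⟩ := cover_in h hz ha haz hzu hau
      have hcv : d ⟨c, hzc⟩ = (c, z) := hcovval c hccov hzc
      have hres := hd.2.2.1 ⟨c, hzc⟩ ⟨u, hzu⟩ hcu
      have hres1 : IsGLB {c, A} c := by
        have := hres.1
        rwa [hcv] at this
      have hres2 : IsGLB {c, B} z := by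
        have := hres.2
        rwa [hcv] at this
      constructor
      · exact hac.trans (hres1.1 (Set.mem_insert_of_mem _ rfl))
      · right
        intro haB
        have hcB : c ≤ B := hcjoin B hBu hzB haB
        have : c ≤ z := hres2.2 (by rintro x (rfl | rfl) <;> [exact le_rfl; exact hcB])
        exact haz (atom_le_atom ha hz (hac.trans this))
  -- A = u via atomisticity
  have hAeq : A = u := by
    refine le_antisymm hAu ((h.atomistic u).2 ?_)
    intro a ha
    exact (hkey a ha.1 ha.2).1
  -- B = z via atomisticity
  have hBeq : B = z := by
    have hset : {a : X | IsAtom a ∧ a ≤ B} = {z} := by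
      ext a
      simp only [Set.mem_setOf_eq, Set.mem_singleton_iff]
      constructor
      · rintro ⟨ha, haB⟩
        rcases (hkey a ha (haB.trans hBu)).2 with h0 | h0
        · exact h0
        · exact absurd haB h0
      · rintro rfl
        exact ⟨hz, hzB⟩
    have := h.atomistic B
    rw [hset] at this
    exact le_antisymm (this.2 (by rintro x rfl; exact le_rfl)) hzB
  exact Prod.ext hAeq hBeq

lemma master_atom (h : IsOrthodomain X) {z : X} {d : {y : X // z ≤ y} → X × X}
    (hd : IsDirectionFor z d) (hz : IsAtom z) :
    (∀ y : {y : X // z ≤ y}, d y = (z, y.1)) ∨ (∀ y : {y : X // z ≤ y}, d y = (y.1, z)) := by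
  by_cases hex₁ : ∃ (w : X) (hw : z ⋖ w), d ⟨w, hw.le⟩ = (w, z)
  · exact Or.inr (master_atom_right h hd hz hex₁)
  by_cases hex₂ : ∃ (w : X) (hw : z ⋖ w), d ⟨w, hw.le⟩ = (z, w)
  · left
    obtain ⟨w, hw, hvw⟩ := hex₂
    have hswap := master_atom_right h hd.swap hz ⟨w, hw, by simp [hvw]⟩
    intro y
    have := hswap y
    simp only [Prod.mk.injEq] at this
    have h1 : (d y).1 = z := this.2
    have h2 : (d y).2 = y.1 := this.1
    exact Prod.ext h1 h2
  · -- no covers at all: everything above z equals z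
    left
    intro y
    obtain ⟨u, hzu⟩ := y
    by_cases huz : u = z
    · subst huz
      rw [dir_val_self hd hzu]
    · exfalso
      obtain ⟨a, ha, hau, hanz⟩ := exists_atom_not_le h hzu (Ne.symm huz)
      have haz : a ≠ z := fun hc => hanz (hc ▸ le_rfl)
      obtain ⟨c, hzc, hac, hcu, hcjoin, hccov⟩ := cover_in h hz ha haz hzu hau
      rcases dir_cover_val h hd hz hccov with h0 | h0
      · exact hex₂ ⟨c, hccov, h0⟩
      · exact hex₁ ⟨c, hccov, h0⟩

end PartJ

/-! ### Part K: the bottom case and the full master lemma -/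
section PartK
variable {X : Type*} [PartialOrder X] [OrderBot X]

lemma dir_atom_val {d : {y : X // (⊥ : X) ≤ y} → X × X} (hd : IsDirectionFor (⊥ : X) d)
    {a : X} (ha : IsAtom a) (hba : (⊥ : X) ≤ a) :
    d ⟨a, hba⟩ = (⊥, a) ∨ d ⟨a, hba⟩ = (a, ⊥) := by
  have pp := hd.2.1 ⟨a, hba⟩
  have hAa : (d ⟨a, hba⟩).1 ≤ a := pp.1.1
  have hBa : (d ⟨a, hba⟩).2 ≤ a := pp.2.1.1
  have hglb : IsGLB {(d ⟨a, hba⟩).1, (d ⟨a, hba⟩).2} ⊥ := pp.2.2.1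
  have hAcase : (d ⟨a, hba⟩).1 = ⊥ ∨ (d ⟨a, hba⟩).1 = a := by
    rcases lt_or_eq_of_le hAa with hlt | he
    · exact Or.inl (ha.2 _ hlt)
    · exact Or.inr he
  have hBcase : (d ⟨a, hba⟩).2 = ⊥ ∨ (d ⟨a, hba⟩).2 = a := by
    rcases lt_or_eq_of_le hBa with hlt | he
    · exact Or.inl (ha.2 _ hlt)
    · exact Or.inr he
  rcases hAcase with hA | hA <;> rcases hBcase with hB | hB
  · -- (⊥, ⊥): impossible by the principal-pair disjunction
    exfalso
    rcases pp.2.2.2 with ⟨h1, _⟩ | ⟨h1, _⟩ | ⟨h1, _, _⟩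
    · exact ha.1 (hA.symm.trans h1).symm
    · exact ha.1 (hB.symm.trans h1).symm
    · exact ha.1 (le_antisymm (h1.2.2.2 ⊥ bot_le (le_of_eq hA) (le_of_eq hB)) bot_le)
  · exact Or.inl (Prod.ext hA hB)
  · exact Or.inr (Prod.ext hA hB)
  · -- (a, a): impossible since the meet is ⊥
    exfalso
    have : a ≤ ⊥ := hglb.2 (by rintro x (rfl | rfl) <;> [exact le_of_eq hA.symm; exact le_of_eq hB.symm])
    exact ha.1 (le_antisymm this bot_le)

lemma no_mixed_bot (h : IsOrthodomain X) {d : {y : X // (⊥ : X) ≤ y} → X × X}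
    (hd : IsDirectionFor (⊥ : X) d) {a₁ a₂ : X} (ha₁ : IsAtom a₁) (ha₂ : IsAtom a₂)
    (hne : a₁ ≠ a₂) (hv1 : d ⟨a₁, bot_le⟩ = (a₁, ⊥)) (hv2 : d ⟨a₂, bot_le⟩ = (⊥, a₂)) :
    False := by
  obtain ⟨j, hj, ha₂j, ha₁j⟩ := hd.2.2.2 ⟨a₂, bot_le⟩ ⟨a₁, bot_le⟩ ha₂.bot_covBy ha₁.bot_covBy hv2 hv1
  have ha₂le : a₂ ≤ j := ha₂j.le
  have ha₁le : a₁ ≤ j := ha₁j.le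
  have hjoin : ∀ y, y ≤ j → a₂ ≤ y → a₁ ≤ y → j ≤ y := by
    intro y _ h2y h1y
    exact hj.2 (by rintro x (rfl | rfl) <;> [exact h2y; exact h1y])
  obtain ⟨c3, hc3, hc3j, hc3a₂, hc3a₁, hclass, hlist, hcov, hlub⟩ :=
    near_lemma h ha₂ ha₁ (Ne.symm hne) ha₂le ha₁le hjoin
  have pp := hd.2.1 ⟨j, bot_le⟩
  set A := (d ⟨j, bot_le⟩).1 with hA
  set B := (d ⟨j, bot_le⟩).2 with hB
  have hres1 := hd.2.2.1 ⟨a₁, bot_le⟩ ⟨j, bot_le⟩ ha₁le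
  have hres2 := hd.2.2.1 ⟨a₂, bot_le⟩ ⟨j, bot_le⟩ ha₂le
  rw [hv1] at hres1
  rw [hv2] at hres2
  -- hres1.1 : IsGLB {a₁, A} a₁ ; hres1.2 : IsGLB {a₁, B} ⊥
  -- hres2.1 : IsGLB {a₂, A} ⊥ ; hres2.2 : IsGLB {a₂, B} a₂
  have ha₁A : a₁ ≤ A := hres1.1.1 (Set.mem_insert_of_mem _ rfl)
  have ha₂B : a₂ ≤ B := hres2.2.1 (Set.mem_insert_of_mem _ rfl)
  have hna₂A : ¬ a₂ ≤ A := by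
    intro hc
    have : a₂ ≤ ⊥ := hres2.1.2 (by rintro x (rfl | rfl) <;> [exact le_rfl; exact hc])
    exact ha₂.1 (le_antisymm this bot_le)
  have hna₁B : ¬ a₁ ≤ B := by
    intro hc
    have : a₁ ≤ ⊥ := hres1.2.2 (by rintro x (rfl | rfl) <;> [exact le_rfl; exact hc])
    exact ha₁.1 (le_antisymm this bot_le)
  -- the principal pair disjunction yields a contradiction
  rcases pp.2.2.2 with ⟨h1, _⟩ | ⟨h1, _⟩ | ⟨_, _, hnd⟩
  · exact hna₂A (h1 ▸ ha₂le)
  · exact hna₁B (h1 ▸ ha₁le)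
  · exact hnd (dualModularIn_bot j)

lemma master_bot_right (h : IsOrthodomain X) {d : {y : X // (⊥ : X) ≤ y} → X × X}
    (hd : IsDirectionFor (⊥ : X) d)
    (hex : ∃ w : X, IsAtom w ∧ d ⟨w, bot_le⟩ = (w, ⊥)) :
    ∀ y : {y : X // (⊥ : X) ≤ y}, d y = (y.1, ⊥) := by
  obtain ⟨w, hw, hvw⟩ := hex
  have hatomval : ∀ (a : X) (ha : IsAtom a), d ⟨a, bot_le⟩ = (a, ⊥) := by
    intro a ha
    rcases dir_atom_val hd ha bot_le with h0 | h0
    · by_cases haw : w = a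
      · subst haw
        rw [hvw] at h0
        exact absurd (congrArg Prod.fst h0) hw.1
      · exact absurd (no_mixed_bot h hd hw ha haw hvw h0) id
    · exact h0
  intro y
  obtain ⟨u, hbu⟩ := y
  by_cases hub : u = ⊥
  · subst hub
    have pp := hd.2.1 ⟨⊥, hbu⟩
    exact Prod.ext (le_antisymm pp.1.1 bot_le) (le_antisymm pp.2.1.1 bot_le)
  set A := (d ⟨u, hbu⟩).1 with hA
  set B := (d ⟨u, hbu⟩).2 with hB
  have pp := hd.2.1 ⟨u, hbu⟩
  have hAu : A ≤ u := pp.1.1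
  have hBu : B ≤ u := pp.2.1.1
  have hkey : ∀ a, IsAtom a → a ≤ u → a ≤ A ∧ ¬ a ≤ B := by
    intro a ha hau
    have hres := hd.2.2.1 ⟨a, bot_le⟩ ⟨u, hbu⟩ hau
    rw [hatomval a ha] at hres
    refine ⟨hres.1.1 (Set.mem_insert_of_mem _ rfl), ?_⟩
    intro hc
    have : a ≤ ⊥ := hres.2.2 (by rintro x (rfl | rfl) <;> [exact le_rfl; exact hc])
    exact ha.1 (le_antisymm this bot_le)
  have hAeq : A = u := by
    refine le_antisymm hAu ((h.atomistic u).2 ?_)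
    intro a ha
    exact (hkey a ha.1 ha.2).1
  have hBeq : B = ⊥ := by
    have hset : {a : X | IsAtom a ∧ a ≤ B} = ∅ := by
      ext a
      simp only [Set.mem_setOf_eq, Set.mem_empty_iff_false, iff_false, not_and]
      intro ha haB
      exact (hkey a ha (haB.trans hBu)).2 haB
    have := h.atomistic B
    rw [hset] at this
    exact le_antisymm (this.2 (by rintro x hx; exact absurd hx (Set.notMem_empty x))) bot_le
  exact Prod.ext hAeq hBeq

lemma master_bot (h : IsOrthodomain X) {d : {y : X // (⊥ : X) ≤ y} → X × X}
    (hd : IsDirectionFor (⊥ : X) d) :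
    (∀ y : {y : X // (⊥ : X) ≤ y}, d y = (⊥, y.1)) ∨
    (∀ y : {y : X // (⊥ : X) ≤ y}, d y = (y.1, ⊥)) := by
  by_cases hex₁ : ∃ w : X, IsAtom w ∧ d ⟨w, bot_le⟩ = (w, ⊥)
  · exact Or.inr (master_bot_right h hd hex₁)
  by_cases hex₂ : ∃ w : X, IsAtom w ∧ d ⟨w, bot_le⟩ = (⊥, w)
  · left
    obtain ⟨w, hw, hvw⟩ := hex₂
    have hswap := master_bot_right h hd.swap ⟨w, hw, by simp [hvw]⟩
    intro y
    have := hswap y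
    simp only [Prod.mk.injEq] at this
    exact Prod.ext this.2 this.1
  · left
    intro y
    obtain ⟨u, hbu⟩ := y
    by_cases hub : u = ⊥
    · subst hub
      have pp := hd.2.1 ⟨⊥, hbu⟩
      exact Prod.ext (le_antisymm pp.1.1 bot_le) (le_antisymm pp.2.1.1 bot_le)
    · exfalso
      obtain ⟨a, ha, hau, _⟩ := exists_atom_not_le h bot_le (fun hc => hub hc.symm)
      rcases dir_atom_val hd ha bot_le with h0 | h0
      · exact hex₂ ⟨a, ha, h0⟩
      · exact hex₁ ⟨a, ha, h0⟩

/-- The master lemma: every direction is a "left" or a "right" direction. -/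
lemma master (h : IsOrthodomain X) (d : ODir X) :
    (∀ y, d.1.2 y = (d.1.1, y.1)) ∨ (∀ y, d.1.2 y = (y.1, d.1.1)) := by
  obtain ⟨⟨x, f⟩, hf⟩ := d
  rcases hf.1 with hb | hb
  · subst hb
    exact master_bot h hf
  · exact master_atom h hf hb

end PartK

/-! ### Part L: left/right directions and characterizations -/
section PartL
variable {X : Type*} [PartialOrder X] [OrderBot X]

def IsLeftD (d : ODir X) : Prop := ∀ y, d.1.2 y = (d.1.1, y.1)
def IsRightD (d : ODir X) : Prop := ∀ y, d.1.2 y = (y.1, d.1.1)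

lemma left_or_right (h : IsOrthodomain X) (d : ODir X) : IsLeftD d ∨ IsRightD d := master h d

lemma not_both (he : EnoughDirections X) (d : ODir X) (hl : IsLeftD d) (hr : IsRightD d) :
    False := by
  have hmax : IsMax d.1.1 := by
    intro u hu
    have h1 := hl ⟨u, hu⟩
    have h2 := hr ⟨u, hu⟩
    rw [h1] at h2
    exact le_of_eq (congrArg Prod.fst h2).symm
  exact he.1 d.1.1 d.2.1 hmax

lemma zeroD_iff {d : ODir X} : IsZeroD d ↔ d.1.1 = ⊥ ∧ IsLeftD d := by
  constructor
  · rintro ⟨h1, h2⟩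
    exact ⟨h1, fun y => (h2 y).trans (Prod.ext h1.symm rfl)⟩
  · rintro ⟨h1, h2⟩
    exact ⟨h1, fun y => (h2 y).trans (Prod.ext h1 rfl)⟩

lemma oneD_iff {d : ODir X} : IsOneD d ↔ d.1.1 = ⊥ ∧ IsRightD d := by
  constructor
  · rintro ⟨h1, h2⟩
    exact ⟨h1, fun y => (h2 y).trans (Prod.ext rfl h1.symm)⟩
  · rintro ⟨h1, h2⟩
    exact ⟨h1, fun y => (h2 y).trans (Prod.ext rfl h1)⟩

lemma eq_of_left {d e : ODir X} (hd : IsLeftD d) (he : IsLeftD e) (h1 : d.1.1 = e.1.1) :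
    d = e := by
  refine ODir.ext' h1 ?_
  intro y hy hy'
  rw [hd ⟨y, hy⟩, he ⟨y, hy'⟩]
  exact Prod.ext h1 rfl

lemma eq_of_right {d e : ODir X} (hd : IsRightD d) (he : IsRightD e) (h1 : d.1.1 = e.1.1) :
    d = e := by
  refine ODir.ext' h1 ?_
  intro y hy hy'
  rw [hd ⟨y, hy⟩, he ⟨y, hy'⟩]
  exact Prod.ext rfl h1

def swapD (d : ODir X) : ODir X := ⟨⟨d.1.1, fun y => ((d.1.2 y).2, (d.1.2 y).1)⟩, d.2.swap⟩

lemma isComplD_swapD (d : ODir X) : IsComplD d (swapD d) := by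
  refine ⟨rfl, ?_⟩
  intro y y' hyy'
  have : y = y' := Subtype.ext hyy'
  subst this
  rfl

lemma complD_left {d e : ODir X} (hc : IsComplD d e) (hl : IsLeftD d) : IsRightD e := by
  intro y
  have hv := hc.2 y ⟨y.1, hc.1 ▸ y.2⟩ rfl
  rw [hl ⟨y.1, hc.1 ▸ y.2⟩] at hv
  rw [hv]
  exact Prod.ext rfl hc.1.symm

lemma complD_right {d e : ODir X} (hc : IsComplD d e) (hr : IsRightD d) : IsLeftD e := by
  intro y
  have hv := hc.2 y ⟨y.1, hc.1 ▸ y.2⟩ rfl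
  rw [hr ⟨y.1, hc.1 ▸ y.2⟩] at hv
  rw [hv]
  exact Prod.ext hc.1.symm rfl

lemma isComplD_of_sides {d e : ODir X} (h1 : e.1.1 = d.1.1)
    (h2 : (IsLeftD d ∧ IsRightD e) ∨ (IsRightD d ∧ IsLeftD e)) : IsComplD d e := by
  refine ⟨h1, ?_⟩
  intro y y' hyy'
  rcases h2 with ⟨hld, hre⟩ | ⟨hrd, hle⟩
  · rw [hld y', hre y]
    exact Prod.ext hyy' h1
  · rw [hrd y', hle y]
    exact Prod.ext h1 hyy'

lemma complD_sides (h : IsOrthodomain X) {d e : ODir X} (hc : IsComplD d e) :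
    (IsLeftD d ∧ IsRightD e) ∨ (IsRightD d ∧ IsLeftD e) := by
  rcases left_or_right h d with hd | hd
  · exact Or.inl ⟨hd, complD_left hc hd⟩
  · exact Or.inr ⟨hd, complD_right hc hd⟩

lemma isComplD_symm (h : IsOrthodomain X) {d e : ODir X} (hc : IsComplD d e) : IsComplD e d := by
  refine isComplD_of_sides hc.1.symm ?_
  rcases complD_sides h hc with ⟨h1, h2⟩ | ⟨h1, h2⟩
  · exact Or.inr ⟨h2, h1⟩
  · exact Or.inl ⟨h2, h1⟩

lemma zeroD_unique {d e : ODir X} (hd : IsZeroD d) (he : IsZeroD e) : d = e := by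
  rw [zeroD_iff] at hd he
  exact eq_of_left hd.2 he.2 (hd.1.trans he.1.symm)

lemma oneD_unique {d e : ODir X} (hd : IsOneD d) (he : IsOneD e) : d = e := by
  rw [oneD_iff] at hd he
  exact eq_of_right hd.2 he.2 (hd.1.trans he.1.symm)

lemma zeroD_ne_oneD (he : EnoughDirections X) {d : ODir X} (h0 : IsZeroD d) (h1 : IsOneD d) :
    False :=
  not_both he d (zeroD_iff.mp h0).2 (oneD_iff.mp h1).2

end PartL

/-! ### Part M: analysis of the orthogonal sum -/
section PartM
variable {X : Type*} [PartialOrder X] [OrderBot X]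

lemma left_of_val (h : IsOrthodomain X) {d : ODir X} {w : X} (hw : d.1.1 ≤ w)
    (hv : d.1.2 ⟨w, hw⟩ = (d.1.1, w)) (hne : w ≠ d.1.1) : IsLeftD d := by
  rcases left_or_right h d with hl | hr
  · exact hl
  · exfalso
    have := hr ⟨w, hw⟩
    rw [hv] at this
    exact hne (congrArg Prod.fst this).symm

lemma right_of_val (h : IsOrthodomain X) {d : ODir X} {w : X} (hw : d.1.1 ≤ w)
    (hv : d.1.2 ⟨w, hw⟩ = (w, d.1.1)) (hne : w ≠ d.1.1) : IsRightD d := by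
  rcases left_or_right h d with hl | hr
  · exfalso
    have := hl ⟨w, hw⟩
    rw [hv] at this
    exact hne (congrArg Prod.fst this)
  · exact hr

lemma lub_ne_atoms {x y w : X} (hx : IsAtom x) (hy : IsAtom y) (hxy : x ≠ y)
    (hl : IsLUB {x, y} w) : w ≠ x ∧ w ≠ y := by
  constructor
  · intro hc
    subst hc
    exact hxy (atom_le_atom hy hx (hl.1 (Set.mem_insert_of_mem _ rfl))).symm
  · intro hc
    subst hc
    exact hxy (atom_le_atom hx hy (hl.1 (Set.mem_insert _ _)))

/-- Structure extracted from the genuine-sum case. -/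
lemma osum4_struct (h : IsOrthodomain X) {x y w z : X}
    (hx : IsAtom x) (hy : IsAtom y) (hxy : x ≠ y) (hlubw : IsLUB {x, y} w)
    (hz : IsAtom z) (hzx : z ≠ x) (hzy : z ≠ y) (hzw : z ≤ w) :
    x ⋖ w ∧ y ⋖ w ∧ IsLUB {y, z} w ∧ IsLUB {x, z} w := by
  have hxw : x ≤ w := hlubw.1 (Set.mem_insert _ _)
  have hyw : y ≤ w := hlubw.1 (Set.mem_insert_of_mem _ rfl)
  have hjoin : ∀ u, u ≤ w → x ≤ u → y ≤ u → w ≤ u := by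
    intro u _ hxu hyu
    exact hlubw.2 (by rintro s (rfl | rfl) <;> [exact hxu; exact hyu])
  obtain ⟨c3, hc3, hc3w, hc3x, hc3y, hclass, hlist, hcov, hlub⟩ :=
    near_lemma h hx hy hxy hxw hyw hjoin
  exact ⟨hcov x hx hxw, hcov y hy hyw, hlub y z hy hz hyw hzw (Ne.symm hzy),
    hlub x z hx hz hxw hzw (Ne.symm hzx)⟩

/-- The third atom below `w` is unique. -/
lemma third_atom_unique (h : IsOrthodomain X) {x y w z z' : X}
    (hx : IsAtom x) (hy : IsAtom y) (hxy : x ≠ y) (hlubw : IsLUB {x, y} w)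
    (hz : IsAtom z) (hzx : z ≠ x) (hzy : z ≠ y) (hzw : z ≤ w)
    (hz' : IsAtom z') (hzx' : z' ≠ x) (hzy' : z' ≠ y) (hzw' : z' ≤ w) : z = z' := by
  have hxw : x ≤ w := hlubw.1 (Set.mem_insert _ _)
  have hyw : y ≤ w := hlubw.1 (Set.mem_insert_of_mem _ rfl)
  have hjoin : ∀ u, u ≤ w → x ≤ u → y ≤ u → w ≤ u := by
    intro u _ hxu hyu
    exact hlubw.2 (by rintro s (rfl | rfl) <;> [exact hxu; exact hyu])
  obtain ⟨c3, hc3, hc3w, hc3x, hc3y, hclass, hlist, hcov, hlub⟩ :=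
    near_lemma h hx hy hxy hxw hyw hjoin
  have h1 : z = c3 := by
    rcases hclass z hz hzw with h0 | h0 | h0
    · exact absurd h0 hzx
    · exact absurd h0 hzy
    · exact h0
  have h2 : z' = c3 := by
    rcases hclass z' hz' hzw' with h0 | h0 | h0
    · exact absurd h0 hzx'
    · exact absurd h0 hzy'
    · exact h0
  exact h1.trans h2.symm

end PartM

/-! ### Part N: the main theorem -/
section PartN
variable {X : Type*} [PartialOrder X] [OrderBot X]

lemma osum_well_defined (h : IsOrthodomain X) (he : EnoughDirections X)
    (d e f f' : ODir X) (hf : OSum d e f) (hf' : OSum d e f') : f = f' := by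
  have one_of_compl_zero : ∀ {a b : ODir X}, IsComplD a b → IsZeroD b → IsOneD a := by
    intro a b hc hzb
    have hbl : IsLeftD b := (zeroD_iff.mp hzb).2
    have har : IsRightD a := by
      rcases complD_sides h hc with ⟨h1, h2⟩ | ⟨h1, h2⟩
      · exact absurd (not_both he b hbl h2) id
      · exact h1
    exact oneD_iff.mpr ⟨hc.1.symm.trans (zeroD_iff.mp hzb).1, har⟩
  rcases hf with ⟨hze, rfl⟩ | ⟨hzd, rfl⟩ | ⟨hc, ho⟩ |
    ⟨w, z, hx, hy, hxy, hlubw, hz, hzx, hzy, hzw, hfz, ⟨hdw, hdv⟩, ⟨hew, hev⟩, ⟨hfw, hfv⟩⟩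
  · rcases hf' with ⟨_, rfl⟩ | ⟨hzd', rfl⟩ | ⟨hc', ho'⟩ |
      ⟨w', z', hx', hy', hxy', _⟩
    · rfl
    · exact zeroD_unique hzd' hze
    · exact oneD_unique (one_of_compl_zero hc' hze) ho'
    · exact absurd (zeroD_iff.mp hze).1 hy'.1
  · rcases hf' with ⟨hze', rfl⟩ | ⟨_, rfl⟩ | ⟨hc', ho'⟩ |
      ⟨w', z', hx', hy', hxy', _⟩
    · exact zeroD_unique hze' hzd
    · rfl
    · -- d zero, compl d e: e is one
      have hdl : IsLeftD d := (zeroD_iff.mp hzd).2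
      have her : IsRightD f := by
        rcases complD_sides h hc' with ⟨h1, h2⟩ | ⟨h1, h2⟩
        · exact h2
        · exact absurd (not_both he d hdl h1) id
      exact oneD_unique (oneD_iff.mpr ⟨hc'.1.trans (zeroD_iff.mp hzd).1, her⟩) ho'
    · exact absurd (zeroD_iff.mp hzd).1 hx'.1
  · rcases hf' with ⟨hze', rfl⟩ | ⟨hzd', rfl⟩ | ⟨_, ho'⟩ |
      ⟨w', z', hx', hy', hxy', _⟩
    · exact oneD_unique ho (one_of_compl_zero hc hze')
    · have hdl : IsLeftD d := (zeroD_iff.mp hzd').2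
      have her : IsRightD f' := by
        rcases complD_sides h hc with ⟨h1, h2⟩ | ⟨h1, h2⟩
        · exact h2
        · exact absurd (not_both he d hdl h1) id
      exact oneD_unique ho (oneD_iff.mpr ⟨hc.1.trans (zeroD_iff.mp hzd').1, her⟩)
    · exact oneD_unique ho ho'
    · exact absurd hc.1.symm hxy'
  · rcases hf' with ⟨hze', rfl⟩ | ⟨hzd', rfl⟩ | ⟨hc', ho'⟩ |
      ⟨w', z', hx', hy', hxy', hlubw', hz', hzx', hzy', hzw', hfz', ⟨hdw', hdv'⟩, ⟨hew', hev'⟩, ⟨hfw', hfv'⟩⟩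
    · exact absurd (zeroD_iff.mp hze').1 hy.1
    · exact absurd (zeroD_iff.mp hzd').1 hx.1
    · exact absurd hc'.1.symm hxy
    · -- both genuine: the third atom is unique
      have hww : w = w' := hlubw.unique hlubw'
      subst hww
      have hzz : z = z' :=
        third_atom_unique h hx hy hxy hlubw hz hzx hzy hzw.le hz' hzx' hzy' hzw'.le
      have hfr : IsRightD f := by
        refine right_of_val h hfw ?_ ?_
        · rw [hfv, hfz]
        · rw [hfz]; exact hzw.lt.ne'
      have hfr' : IsRightD f' := by
        refine right_of_val h hfw' ?_ ?_
        · rw [hfv', hfz']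
        · rw [hfz']; exact hzw'.lt.ne'
      exact eq_of_right hfr hfr' (by rw [hfz, hfz', hzz])

lemma osum_comm (h : IsOrthodomain X) (d e f : ODir X) (hs : OSum d e f) : OSum e d f := by
  rcases hs with ⟨hze, rfl⟩ | ⟨hzd, rfl⟩ | ⟨hc, ho⟩ |
    ⟨w, z, hx, hy, hxy, hlubw, hz, hzx, hzy, hzw, hfz, hdval, heval, hfval⟩
  · exact Or.inr (Or.inl ⟨hze, rfl⟩)
  · exact Or.inl ⟨hzd, rfl⟩
  · exact Or.inr (Or.inr (Or.inl ⟨isComplD_symm h hc, ho⟩))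
  · refine Or.inr (Or.inr (Or.inr ⟨w, z, hy, hx, Ne.symm hxy, ?_, hz, hzy, hzx, hzw, hfz,
      heval, hdval, hfval⟩))
    rwa [Set.pair_comm]

lemma osum_assoc (h : IsOrthodomain X) (he : EnoughDirections X)
    (d e f g u : ODir X) (hdeg : OSum d e g) (hgfu : OSum g f u) :
    ∃ v : ODir X, OSum e f v ∧ OSum d v u := by
  have hdeg' := hdeg
  rcases hdeg with ⟨hze, rfl⟩ | ⟨hzd, rfl⟩ | ⟨hcde, hog⟩ |
    ⟨w, z, hx, hy, hxy, hlubw, hz, hzx, hzy, hzw, hgz, ⟨hdw, hdv⟩, ⟨hew, hev⟩, ⟨hgw, hgv⟩⟩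
  · exact ⟨f, Or.inr (Or.inl ⟨hze, rfl⟩), hgfu⟩
  · exact ⟨u, hgfu, Or.inr (Or.inl ⟨hzd, rfl⟩)⟩
  · rcases hgfu with ⟨hzf, rfl⟩ | ⟨hzg, rfl⟩ | ⟨hcgf, hou⟩ |
      ⟨w₂, z₂, hgx₂, hft₂, hgf₂, _⟩
    · exact ⟨e, Or.inl ⟨hzf, rfl⟩, hdeg'⟩
    · exact absurd (zeroD_ne_oneD he hzg hog) id
    · have hgr : IsRightD g := (oneD_iff.mp hog).2
      have hfl : IsLeftD f := complD_right hcgf hgr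
      have hf0 : IsZeroD f := zeroD_iff.mpr ⟨hcgf.1.trans (oneD_iff.mp hog).1, hfl⟩
      exact ⟨e, Or.inl ⟨hf0, rfl⟩, Or.inr (Or.inr (Or.inl ⟨hcde, hou⟩))⟩
    · exact absurd (oneD_iff.mp hog).1 hgx₂.1
  · rcases hgfu with ⟨hzf, rfl⟩ | ⟨hzg, rfl⟩ | ⟨hcgf, hou⟩ |
      ⟨w₂, z₂, hgx₂, hft₂, hgf₂, hlubw₂, hz₂, hz₂g, hz₂f, hz₂w, huz₂, ⟨hgw₂, hgv₂⟩, _⟩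
    · exact ⟨e, Or.inl ⟨hzf, rfl⟩, hdeg'⟩
    · exact absurd (hgz.symm.trans (zeroD_iff.mp hzg).1) hz.1
    · -- the genuine-plus-complement case
      have hwnez : w ≠ z := hzw.lt.ne'
      have hgr : IsRightD g := right_of_val h hgw (by rw [hgv, hgz]) (by rw [hgz]; exact hwnez)
      have hfl : IsLeftD f := complD_right hcgf hgr
      have hffst : f.1.1 = z := hcgf.1.trans hgz
      obtain ⟨hxcov, hycov, hlubyz, hlubxz⟩ := osum4_struct h hx hy hxy hlubw hz hzx hzy hzw.le
      refine ⟨swapD d, ?_, Or.inr (Or.inr (Or.inl ⟨isComplD_swapD d, hou⟩))⟩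
      refine Or.inr (Or.inr (Or.inr ⟨w, d.1.1, hy, ?_, ?_, ?_, hx, hxy, ?_, hxcov, rfl,
        ⟨hew, hev⟩, ?_, ?_⟩))
      · rw [hffst]; exact hz
      · rw [hffst]; exact Ne.symm hzy
      · rw [hffst]; exact hlubyz
      · rw [hffst]; exact Ne.symm hzx
      · refine ⟨hffst ▸ hzw.le, ?_⟩
        exact hfl _
      · refine ⟨hdw, ?_⟩
        show ((d.1.2 ⟨w, hdw⟩).2, (d.1.2 ⟨w, hdw⟩).1) = (w, d.1.1)
        rw [hdv]
    · -- two genuine sums in a row: impossible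
      exfalso
      have hwnez : w ≠ z := hzw.lt.ne'
      have hgr : IsRightD g := right_of_val h hgw (by rw [hgv, hgz]) (by rw [hgz]; exact hwnez)
      have hgl : IsLeftD g :=
        left_of_val h hgw₂ hgv₂ (lub_ne_atoms hgx₂ hft₂ hgf₂ hlubw₂).1
      exact not_both he g hgl hgr

end PartN

section PartO
variable {X : Type*} [PartialOrder X] [OrderBot X]

lemma osum_one_compl (h : IsOrthodomain X) (he : EnoughDirections X)
    (d e f : ODir X) (hs : OSum d e f) (ho : IsOneD f) : IsComplD d e := by
  rcases hs with ⟨hze, rfl⟩ | ⟨hzd, rfl⟩ | ⟨hc, _⟩ |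
    ⟨w, z, hx, hy, hxy, hlubw, hz, hzx, hzy, hzw, hfz, _⟩
  · -- f = d is one, e is zero
    refine isComplD_of_sides ((zeroD_iff.mp hze).1.trans (oneD_iff.mp ho).1.symm) ?_
    exact Or.inr ⟨(oneD_iff.mp ho).2, (zeroD_iff.mp hze).2⟩
  · -- f = e is one, d is zero
    refine isComplD_of_sides ((oneD_iff.mp ho).1.trans (zeroD_iff.mp hzd).1.symm) ?_
    exact Or.inl ⟨(zeroD_iff.mp hzd).2, (oneD_iff.mp ho).2⟩
  · exact hc
  · exact absurd (hfz.symm.trans (oneD_iff.mp ho).1) hz.1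

lemma osum_self_zero (h : IsOrthodomain X) (he : EnoughDirections X)
    (d f : ODir X) (hs : OSum d d f) : IsZeroD d := by
  rcases hs with ⟨hzd, _⟩ | ⟨hzd, _⟩ | ⟨hc, _⟩ | ⟨w, z, hx, hy, hxy, _⟩
  · exact hzd
  · exact hzd
  · exfalso
    rcases complD_sides h hc with ⟨h1, h2⟩ | ⟨h1, h2⟩
    · exact not_both he d h1 h2
    · exact not_both he d h2 h1
  · exact absurd rfl hxy

end PartO


/-- If `X` is an orthodomain with enough directions, then `oDir(X)` with the
partial sum `⊕`, orthocomplementation `d ↦ d'`, and constants `0`, `1` is an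
orthoalgebra: `⊕` is well defined, commutative and associative, `0` and `1`
exist, `d'` is the unique direction with `d ⊕ d' = 1`, and `d ⊕ d` is defined
only for `d = 0`. -/
theorem stmt17 {X : Type*} [PartialOrder X] [OrderBot X]
    (h : IsOrthodomain X) (he : EnoughDirections X) :
    (∀ d e f f' : ODir X, OSum d e f → OSum d e f' → f = f') ∧
    (∀ d e f : ODir X, OSum d e f → OSum e d f) ∧
    (∀ d e f g u : ODir X, OSum d e g → OSum g f u →
      ∃ v : ODir X, OSum e f v ∧ OSum d v u) ∧
    (∃ z : ODir X, IsZeroD z) ∧ (∃ o : ODir X, IsOneD o) ∧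
    (∀ d : ODir X, ∃ e o : ODir X, IsComplD d e ∧ IsOneD o ∧ OSum d e o) ∧
    (∀ d e f : ODir X, OSum d e f → IsOneD f → IsComplD d e) ∧
    (∀ d f : ODir X, OSum d d f → IsZeroD d) :=
  ⟨osum_well_defined h he, osum_comm h, osum_assoc h he,
    ⟨zeroD, isZeroD_zeroD⟩, ⟨oneD, isOneD_oneD⟩,
    fun d => ⟨swapD d, oneD, isComplD_swapD d, isOneD_oneD,
      Or.inr (Or.inr (Or.inl ⟨isComplD_swapD d, isOneD_oneD⟩))⟩,
    osum_one_compl h he, osum_self_zero h he⟩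
end

section
/- In the hypergraph of an orthoalgebra A, if two lines have at least two points in common then they are equal. -/
universe u

/-- An orthoalgebra: a set with a partial commutative associative sum `⊕`
(with domain of definition `Perp`), an orthocomplementation `'`, and constants
`0`, `1` (with `0 = 1'`), such that `a'` is the unique element with
`a ⊕ a' = 1`, and `a ⊕ a` is defined only when `a = 0`.  The operation
`oplus` is a total function whose values are only meaningful on `Perp`. -/
class Orthoalgebra (A : Type u) where
  Perp : A → A → Prop
  oplus : A → A → A
  ocompl : A → A
  zero : A
  one : A
  perp_comm : ∀ {a b : A}, Perp a b → Perp b a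
  oplus_comm : ∀ {a b : A}, Perp a b → oplus a b = oplus b a
  perp_assoc : ∀ {a b c : A}, Perp a b → Perp (oplus a b) c →
    Perp b c ∧ Perp a (oplus b c)
  oplus_assoc : ∀ {a b c : A}, Perp a b → Perp (oplus a b) c →
    oplus (oplus a b) c = oplus a (oplus b c)
  perp_ocompl : ∀ a : A, Perp a (ocompl a)
  oplus_ocompl : ∀ a : A, oplus a (ocompl a) = one
  ocompl_unique : ∀ {a b : A}, Perp a b → oplus a b = one → b = ocompl a
  perp_self : ∀ {a : A}, Perp a a → a = zero
  zero_def : zero = ocompl one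

open Orthoalgebra

variable {A : Type u} [Orthoalgebra A]

/-- A subalgebra of an orthoalgebra: contains `0` and `1`, closed under `'`
and under `⊕` of orthogonal pairs. -/
def IsOASubalg (S : Set A) : Prop :=
  zero ∈ S ∧ one ∈ S ∧ (∀ a ∈ S, ocompl a ∈ S) ∧
    ∀ a ∈ S, ∀ b ∈ S, Perp a b → oplus a b ∈ S

/-- A Boolean subalgebra of an orthoalgebra: a subalgebra which, as an
orthoalgebra in its own right, is Boolean, i.e. is isomorphic to the
orthoalgebra induced by a Boolean algebra. -/
def IsBooleanSubalg (S : Set A) : Prop :=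
  IsOASubalg S ∧
  ∃ (B : Type u) (_ : BooleanAlgebra B) (f : S → B),
    Function.Bijective f ∧
    (∀ z : S, (z : A) = zero → f z = ⊥) ∧
    (∀ o : S, (o : A) = one → f o = ⊤) ∧
    (∀ a c : S, (c : A) = ocompl (a : A) → f c = (f a)ᶜ) ∧
    (∀ a b : S, Perp (a : A) (b : A) ↔ f a ⊓ f b = ⊥) ∧
    (∀ a b c : S, Perp (a : A) (b : A) → (c : A) = oplus (a : A) (b : A) →
      f c = f a ⊔ f b)

section BoolLemmas

variable {B : Type u} [BooleanAlgebra B]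

set_option maxHeartbeats 1000000 in
lemma bool_exists (hB : Nat.card B = 8) (x y : B) :
    x ⊓ y = ⊥ ∨ x ⊓ yᶜ = ⊥ ∨ xᶜ ⊓ y = ⊥ ∨ xᶜ ⊓ yᶜ = ⊥ := by
  by_contra h
  push_neg at h
  obtain ⟨h1, h2, h3, h4⟩ := h
  haveI : Finite B := Nat.finite_of_card_ne_zero (by omega)
  haveI := Fintype.ofFinite B
  classical
  set g : Bool × Bool → B :=
    fun p => (bif p.1 then x else xᶜ) ⊓ (bif p.2 then y else yᶜ) with hg
  have hg0 : ∀ p, g p ≠ ⊥ := by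
    rintro ⟨i, j⟩ hp
    cases i <;> cases j <;> simp [hg] at hp <;> tauto
  have hgd : ∀ p q, p ≠ q → g p ⊓ g q = ⊥ := by
    rintro ⟨i, j⟩ ⟨k, l⟩ hpq
    have key : ∀ u v u' v' : B, u ⊓ u' = ⊥ → (u ⊓ v) ⊓ (u' ⊓ v') = ⊥ := by
      intro u v u' v' huu
      have : (u ⊓ v) ⊓ (u' ⊓ v') ≤ u ⊓ u' := inf_le_inf inf_le_left inf_le_left
      exact le_bot_iff.mp (huu ▸ this)
    have key2 : ∀ u v u' v' : B, v ⊓ v' = ⊥ → (u ⊓ v) ⊓ (u' ⊓ v') = ⊥ := by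
      intro u v u' v' hvv
      have : (u ⊓ v) ⊓ (u' ⊓ v') ≤ v ⊓ v' := inf_le_inf inf_le_right inf_le_right
      exact le_bot_iff.mp (hvv ▸ this)
    cases i <;> cases j <;> cases k <;> cases l <;> simp_all [hg] <;>
      first
        | exact key _ _ _ _ (by simp)
        | exact key _ _ _ _ (by rw [inf_comm]; simp)
        | exact key2 _ _ _ _ (by simp)
        | exact key2 _ _ _ _ (by rw [inf_comm]; simp)
  have hF : Function.Injective (fun S : Finset (Bool × Bool) => S.sup g) := by
    have main : ∀ S T : Finset (Bool × Bool), S.sup g = T.sup g →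
        ∀ p ∈ S, p ∈ T := by
      intro S T hST p hp
      by_contra hpT
      have h1 : g p ≤ S.sup g := Finset.le_sup hp
      have h2 : g p ⊓ T.sup g = ⊥ := by
        rw [Finset.sup_inf_distrib_left, Finset.sup_eq_bot_iff]
        intro q hq
        exact hgd p q (fun h => hpT (h ▸ hq))
      have : g p = ⊥ := by
        rw [← h2]
        exact (inf_eq_left.mpr (hST ▸ h1)).symm
      exact hg0 p this
    intro S T hST
    ext p
    exact ⟨fun hp => main S T hST p hp, fun hp => main T S hST.symm p hp⟩
  have hcard := Fintype.card_le_of_injective _ hF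
  rw [Fintype.card_finset] at hcard
  have : Fintype.card B = 8 := by rw [← Nat.card_eq_fintype_card, hB]
  rw [this] at hcard
  simp [Fintype.card_prod] at hcard

lemma bool_univ (hB : Nat.card B = 8) (x y : B)
    (hx0 : x ≠ ⊥) (hx1 : x ≠ ⊤) (hy0 : y ≠ ⊥) (hy1 : y ≠ ⊤)
    (hyx : y ≠ x) (hyxc : y ≠ xᶜ) (hxy : x ⊓ y = ⊥) :
    ({⊥, ⊤, x, xᶜ, y, yᶜ, x ⊔ y, (x ⊔ y)ᶜ} : Set B) = Set.univ := by
  haveI : Finite B := Nat.finite_of_card_ne_zero (by omega)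
  set s := x ⊔ y with hs
  have hbt : (⊥ : B) ≠ ⊤ := by
    intro h
    apply hx0
    calc x = x ⊓ ⊤ := (inf_top_eq x).symm
    _ = x ⊓ ⊥ := by rw [h]
    _ = ⊥ := inf_bot_eq x
  have hselfc : ∀ z : B, z ≠ ⊥ → z ≠ zᶜ := by
    intro z hz h
    apply hz
    have : z ⊓ z = ⊥ := by nth_rewrite 2 [h]; exact inf_compl_eq_bot
    rwa [inf_idem] at this
  have hxyd : y ⊓ x = ⊥ := by rwa [inf_comm]
  have hs0 : s ≠ ⊥ := fun h => hx0 (le_bot_iff.mp (h ▸ le_sup_left))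
  have hs1 : s ≠ ⊤ := by
    intro h
    exact hyxc ((IsCompl.symm ⟨disjoint_iff.mpr hxy, codisjoint_iff.mpr h⟩).eq_compl)
  have hsx : s ≠ x := by
    intro h
    apply hy0
    have : y ≤ x := h ▸ le_sup_right
    rw [← hxyd]
    exact (inf_eq_left.mpr this).symm
  have hsy : s ≠ y := by
    intro h
    apply hx0
    have : x ≤ y := h ▸ le_sup_left
    rw [← hxy]
    exact (inf_eq_left.mpr this).symm
  have hsxc : s ≠ xᶜ := by
    intro h
    apply hx0
    have h1 : x ≤ s := le_sup_left
    have h2 : x ≤ x ⊓ xᶜ := le_inf le_rfl (h ▸ h1)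
    rw [inf_compl_eq_bot] at h2
    exact le_bot_iff.mp h2
  have hsyc : s ≠ yᶜ := by
    intro h
    apply hy0
    have h1 : y ≤ s := le_sup_right
    have h2 : y ≤ y ⊓ yᶜ := le_inf le_rfl (h ▸ h1)
    rw [inf_compl_eq_bot] at h2
    exact le_bot_iff.mp h2
  have compl_ne : ∀ u v : B, u ≠ v → uᶜ ≠ vᶜ := fun u v h hc => h (by
    rw [← compl_compl u, hc, compl_compl])
  have hss : s ≠ sᶜ := hselfc s hs0
  have hxc0 : xᶜ ≠ ⊥ := fun h => hx1 (by rw [← compl_compl x, h, compl_bot])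
  have hxc1 : xᶜ ≠ ⊤ := fun h => hx0 (by rw [← compl_compl x, h, compl_top])
  have hyc0 : yᶜ ≠ ⊥ := fun h => hy1 (by rw [← compl_compl y, h, compl_bot])
  have hyc1 : yᶜ ≠ ⊤ := fun h => hy0 (by rw [← compl_compl y, h, compl_top])
  have hsc0 : sᶜ ≠ ⊥ := fun h => hs1 (by rw [← compl_compl s, h, compl_bot])
  have hsc1 : sᶜ ≠ ⊤ := fun h => hs0 (by rw [← compl_compl s, h, compl_top])
  have hxxc : x ≠ xᶜ := hselfc x hx0
  have hyyc : y ≠ yᶜ := hselfc y hy0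
  have hxyc : x ≠ yᶜ := fun h => hyxc (by rw [h, compl_compl])
  have hxcy : xᶜ ≠ y := fun h => hyxc h.symm
  have hxcyc : xᶜ ≠ yᶜ := compl_ne _ _ (fun h => hyx h.symm)
  have hscx : sᶜ ≠ x := fun h => hsxc (by rw [← compl_compl s, h])
  have hscxc : sᶜ ≠ xᶜ := compl_ne _ _ hsx
  have hscy : sᶜ ≠ y := fun h => hsyc (by rw [← compl_compl s, h])
  have hscyc : sᶜ ≠ yᶜ := compl_ne _ _ hsy
  apply Set.eq_of_subset_of_ncard_le (Set.subset_univ _)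
  rw [Set.ncard_univ, hB]
  have : ({⊥, ⊤, x, xᶜ, y, yᶜ, s, sᶜ} : Set B).ncard = 8 := by
    rw [Set.ncard_insert_of_notMem (by
      simp only [Set.mem_insert_iff, Set.mem_singleton_iff, not_or]
      exact ⟨hbt, hx0.symm, hxc0.symm, hy0.symm, hyc0.symm, hs0.symm, hsc0.symm⟩)]
    rw [Set.ncard_insert_of_notMem (by
      simp only [Set.mem_insert_iff, Set.mem_singleton_iff, not_or]
      exact ⟨hx1.symm, hxc1.symm, hy1.symm, hyc1.symm, hs1.symm, hsc1.symm⟩)]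
    rw [Set.ncard_insert_of_notMem (by
      simp only [Set.mem_insert_iff, Set.mem_singleton_iff, not_or]
      exact ⟨hxxc, hyx.symm, hxyc, hsx.symm, hscx.symm⟩)]
    rw [Set.ncard_insert_of_notMem (by
      simp only [Set.mem_insert_iff, Set.mem_singleton_iff, not_or]
      exact ⟨hxcy, hxcyc, hsxc.symm, hscxc.symm⟩)]
    rw [Set.ncard_insert_of_notMem (by
      simp only [Set.mem_insert_iff, Set.mem_singleton_iff, not_or]
      exact ⟨hyyc, hsy.symm, hscy.symm⟩)]
    rw [Set.ncard_insert_of_notMem (by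
      simp only [Set.mem_insert_iff, Set.mem_singleton_iff, not_or]
      exact ⟨hsyc.symm, hscyc.symm⟩)]
    rw [Set.ncard_insert_of_notMem (by
      simp only [Set.mem_singleton_iff]
      exact hss)]
    rw [Set.ncard_singleton]
  omega

end BoolLemmas

lemma oa_ocompl_ocompl (a : A) : ocompl (ocompl a) = a := by
  have h1 : Perp (ocompl a) a := perp_comm (perp_ocompl a)
  have h2 : oplus (ocompl a) a = one := by
    rw [oplus_comm h1]; exact oplus_ocompl a
  exact (ocompl_unique h1 h2).symm

lemma oa_ocompl_one : (ocompl one : A) = zero := zero_def.symm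

lemma oa_ocompl_zero : (ocompl zero : A) = one := by
  rw [zero_def, oa_ocompl_ocompl]

lemma key_lemma (W : Set A) (hW : IsBooleanSubalg W) (hWc : Nat.card W = 8)
    (a b : A) (ha : a ∈ W) (hb : b ∈ W)
    (ha0 : a ≠ zero) (ha1 : a ≠ one) (hb0 : b ≠ zero) (hb1 : b ≠ one)
    (hba : b ≠ a) (hbac : b ≠ ocompl a) (hab : Perp a b) :
    W = {zero, one, a, ocompl a, b, ocompl b, oplus a b, ocompl (oplus a b)} := by
  obtain ⟨⟨hz, ho, hcmem, hplus⟩, B, _, f, hbij, hf0, hf1, hfc, hfperp, hfsup⟩ := hW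
  have hinj : ∀ u v : W, f u = f v → (u : A) = v := by
    intro u v h
    exact Subtype.ext_iff.mp (hbij.injective h)
  have hcB : Nat.card B = 8 := by
    rw [← Nat.card_eq_of_bijective f hbij, hWc]
  have hc : oplus a b ∈ W := hplus a ha b hb hab
  set x := f ⟨a, ha⟩ with hx
  set y := f ⟨b, hb⟩ with hy
  have hvz : f ⟨zero, hz⟩ = ⊥ := hf0 _ rfl
  have hvo : f ⟨one, ho⟩ = ⊤ := hf1 _ rfl
  have hvac : f ⟨ocompl a, hcmem a ha⟩ = xᶜ := hfc ⟨a, ha⟩ _ rfl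
  have hvbc : f ⟨ocompl b, hcmem b hb⟩ = yᶜ := hfc ⟨b, hb⟩ _ rfl
  have hvs : f ⟨oplus a b, hc⟩ = x ⊔ y := hfsup ⟨a, ha⟩ ⟨b, hb⟩ _ hab rfl
  have hvsc : f ⟨ocompl (oplus a b), hcmem _ hc⟩ = (x ⊔ y)ᶜ := by
    rw [hfc ⟨oplus a b, hc⟩ _ rfl, hvs]
  have hx0 : x ≠ ⊥ := fun h => ha0 (hinj _ _ (h.trans hvz.symm))
  have hx1 : x ≠ ⊤ := fun h => ha1 (hinj _ _ (h.trans hvo.symm))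
  have hy0 : y ≠ ⊥ := fun h => hb0 (hinj _ _ (h.trans hvz.symm))
  have hy1 : y ≠ ⊤ := fun h => hb1 (hinj _ _ (h.trans hvo.symm))
  have hyx : y ≠ x := fun h => hba (hinj _ _ h)
  have hyxc : y ≠ xᶜ := fun h => hbac (hinj _ _ (h.trans hvac.symm))
  have hxy : x ⊓ y = ⊥ := (hfperp ⟨a, ha⟩ ⟨b, hb⟩).mp hab
  have huniv := bool_univ hcB x y hx0 hx1 hy0 hy1 hyx hyxc hxy
  apply Set.Subset.antisymm
  · intro w hw
    have hmem : f ⟨w, hw⟩ ∈ ({⊥, ⊤, x, xᶜ, y, yᶜ, x ⊔ y, (x ⊔ y)ᶜ} : Set B) := by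
      rw [huniv]; trivial
    simp only [Set.mem_insert_iff, Set.mem_singleton_iff] at hmem
    rcases hmem with h | h | h | h | h | h | h | h
    · exact Or.inl (hinj _ _ (h.trans hvz.symm))
    · exact Or.inr (Or.inl (hinj _ _ (h.trans hvo.symm)))
    · exact Or.inr (Or.inr (Or.inl (hinj _ _ h)))
    · exact Or.inr (Or.inr (Or.inr (Or.inl (hinj _ _ (h.trans hvac.symm)))))
    · exact Or.inr (Or.inr (Or.inr (Or.inr (Or.inl (hinj _ _ h)))))
    · exact Or.inr (Or.inr (Or.inr (Or.inr (Or.inr (Or.inl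
        (hinj _ _ (h.trans hvbc.symm)))))))
    · exact Or.inr (Or.inr (Or.inr (Or.inr (Or.inr (Or.inr (Or.inl
        (hinj _ _ (h.trans hvs.symm))))))))
    · exact Or.inr (Or.inr (Or.inr (Or.inr (Or.inr (Or.inr (Or.inr
        (hinj _ _ (h.trans hvsc.symm))))))))
  · intro w hw
    simp only [Set.mem_insert_iff, Set.mem_singleton_iff] at hw
    rcases hw with h | h | h | h | h | h | h | h <;> subst h
    · exact hz
    · exact ho
    · exact ha
    · exact hcmem a ha
    · exact hb
    · exact hcmem b hb
    · exact hc
    · exact hcmem _ hc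

/-- In the hypergraph of an orthoalgebra `A`, points are the 4-element Boolean
subalgebras and lines are the 8-element Boolean subalgebras (a point lies on a
line when it is contained in it).  If two lines have at least two points in
common, then they are equal. -/
theorem stmt18 (W₁ W₂ P₁ P₂ : Set A)
    (hW₁ : IsBooleanSubalg W₁) (hW₁c : Nat.card W₁ = 8)
    (hW₂ : IsBooleanSubalg W₂) (hW₂c : Nat.card W₂ = 8)
    (hP₁ : IsBooleanSubalg P₁) (hP₁c : Nat.card P₁ = 4)
    (hP₂ : IsBooleanSubalg P₂) (hP₂c : Nat.card P₂ = 4)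
    (hne : P₁ ≠ P₂)
    (h11 : P₁ ⊆ W₁) (h12 : P₁ ⊆ W₂) (h21 : P₂ ⊆ W₁) (h22 : P₂ ⊆ W₂) :
    W₁ = W₂ := by
  -- finiteness of P₁, P₂
  have hP1n : P₁.ncard = 4 := by rw [← Nat.card_coe_set_eq, hP₁c]
  have hP2n : P₂.ncard = 4 := by rw [← Nat.card_coe_set_eq, hP₂c]
  have hP1fin : P₁.Finite := by
    by_contra h
    rw [Set.Infinite.ncard h] at hP1n
    omega
  have hP2fin : P₂.Finite := by
    by_contra h
    rw [Set.Infinite.ncard h] at hP2n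
    omega
  obtain ⟨⟨hz1, ho1, hcm1, _⟩, _⟩ := hP₁
  obtain ⟨⟨hz2, ho2, hcm2, _⟩, _⟩ := hP₂
  -- find a ∈ P₁ \ {zero, one}
  have hex_a : ∃ a ∈ P₁, a ≠ zero ∧ a ≠ one := by
    by_contra h
    push_neg at h
    have hsub : P₁ ⊆ {zero, one} := by
      intro z hzm
      rcases eq_or_ne z zero with h0 | h0
      · exact Or.inl h0
      · exact Or.inr (h z hzm h0)
    have := Set.ncard_le_ncard hsub ((Set.finite_singleton one).insert zero)
    have h2 : ({zero, one} : Set A).ncard ≤ 2 := by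
      have := Set.ncard_insert_le (zero : A) ({one} : Set A)
      rw [Set.ncard_singleton] at this
      omega
    omega
  obtain ⟨a, haP, ha0, ha1⟩ := hex_a
  -- find b ∈ P₂ \ P₁
  have hex_b : ∃ b ∈ P₂, b ∉ P₁ := by
    by_contra h
    push_neg at h
    exact hne (Set.eq_of_subset_of_ncard_le h (by omega) hP1fin).symm
  obtain ⟨b, hbP, hbnP⟩ := hex_b
  -- the main step
  have main : ∀ u v : A, u ∈ P₁ → v ∈ P₂ → u ≠ zero → u ≠ one → v ∉ P₁ →
      Perp u v → W₁ = W₂ := by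
    intro u v huP hvP hu0 hu1 hvnP huv
    have hv0 : v ≠ zero := fun h => hvnP (h ▸ hz1)
    have hv1 : v ≠ one := fun h => hvnP (h ▸ ho1)
    have hvu : v ≠ u := fun h => hvnP (h ▸ huP)
    have hvuc : v ≠ ocompl u := fun h => hvnP (h ▸ hcm1 u huP)
    rw [key_lemma W₁ hW₁ hW₁c u v (h11 huP) (h21 hvP) hu0 hu1 hv0 hv1 hvu hvuc huv,
      key_lemma W₂ hW₂ hW₂c u v (h12 huP) (h22 hvP) hu0 hu1 hv0 hv1 hvu hvuc huv]
  -- properties preserved under complementation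
  have hca0 : ocompl a ≠ zero := fun h => ha1 (by
    rw [← oa_ocompl_ocompl a, h, oa_ocompl_zero])
  have hca1 : ocompl a ≠ one := fun h => ha0 (by
    rw [← oa_ocompl_ocompl a, h, oa_ocompl_one])
  have hcbnP : ocompl b ∉ P₁ := fun h => hbnP (by
    rw [← oa_ocompl_ocompl b]; exact hcm1 _ h)
  -- use W₁'s Boolean structure to find a perpendicular pair
  obtain ⟨⟨hzW, hoW, hcmW, hplusW⟩, B, _, f, hbij, hf0, hf1, hfc, hfperp, hfsup⟩ := hW₁
  have hcB : Nat.card B = 8 := by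
    rw [← Nat.card_eq_of_bijective f hbij, hW₁c]
  have haW : a ∈ W₁ := h11 haP
  have hbW : b ∈ W₁ := h21 hbP
  set x := f ⟨a, haW⟩ with hx
  set y := f ⟨b, hbW⟩ with hy
  have hvac : f ⟨ocompl a, hcmW a haW⟩ = xᶜ := hfc ⟨a, haW⟩ _ rfl
  have hvbc : f ⟨ocompl b, hcmW b hbW⟩ = yᶜ := hfc ⟨b, hbW⟩ _ rfl
  rcases bool_exists hcB x y with h | h | h | h
  · exact main a b haP hbP ha0 ha1 hbnP ((hfperp ⟨a, haW⟩ ⟨b, hbW⟩).mpr h)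
  · refine main a (ocompl b) haP (hcm2 b hbP) ha0 ha1 hcbnP ?_
    refine (hfperp ⟨a, haW⟩ ⟨ocompl b, hcmW b hbW⟩).mpr ?_
    rw [hvbc]; exact h
  · refine main (ocompl a) b (hcm1 a haP) hbP hca0 hca1 hbnP ?_
    refine (hfperp ⟨ocompl a, hcmW a haW⟩ ⟨b, hbW⟩).mpr ?_
    rw [hvac]; exact h
  · refine main (ocompl a) (ocompl b) (hcm1 a haP) (hcm2 b hbP) hca0 hca1 hcbnP ?_
    refine (hfperp ⟨ocompl a, hcmW a haW⟩ ⟨ocompl b, hcmW b hbW⟩).mpr ?_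
    rw [hvac, hvbc]; exact h
end
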